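/- arXiv:2009.08520 — 7 statements merged into one kernel-verified Lean document; each statement's English description precedes it below -/
import Mathlib

section
/- For every integer n ≥ 1 and every k ≥ 0, the homomorphism Z̄^n_k → (R_n)_{2k} sending the class of the symbol X_I to the residue class of the monomial X_I in R_n is well defined and is an isomorphism of abelian groups. In other words, the degree-2k component of R_n is generated by the squarefree monomials X_I with |I| = k, subject precisely to the linear relations Σ_{|I|=k, I⊇J} X_I = 0 for all subsets J ⊆ {1,…,2n} with |J| < k. -/
/-!
Context: For n ≥ 1, R_n = ℤ[X_1,…,X_{2n}]/I_n where I_n is generated by the X_i^2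
and the elementary symmetric polynomials Σ_{|I|=k} X_I, k = 1,…,2n.  With the grading
deg X_i = 2, the degree-2k component of R_n is the image of the space of homogeneous
polynomials of (standard) degree k.  Z^n_k is the free abelian group on the k-element
subsets I ⊆ {1,…,2n}, and Z̄^n_k its quotient by the subgroup generated by the elements
Σ_{|I|=k, I⊇J} X_I for |J| < k.

Statement 0:  The homomorphism Z̄^n_k → (R_n)_{2k}, [X_I] ↦ [monomial X_I], is well
defined and an isomorphism of abelian groups.  Equivalently, for the lift
φ : Z^n_k → R_n, the kernel of φ is exactly the relations subgroup and the range of φ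
is exactly the degree-2k component of R_n.
-/

open MvPolynomial

noncomputable section

/-- The ideal I_n generated by the squares of the variables and the elementary
symmetric polynomials in 2n variables. -/
def relIdeal (n : ℕ) : Ideal (MvPolynomial (Fin (2 * n)) ℤ) :=
  Ideal.span
    ((Set.range fun i : Fin (2 * n) => (X i : MvPolynomial (Fin (2 * n)) ℤ) ^ 2) ∪
      {p | ∃ k : ℕ, 1 ≤ k ∧ k ≤ 2 * n ∧
        p = ∑ I ∈ Finset.powersetCard k (Finset.univ : Finset (Fin (2 * n))), ∏ i ∈ I, X i})

/-- The ring R_n = ℤ[X_1,…,X_{2n}]/I_n. -/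
abbrev Rn (n : ℕ) := MvPolynomial (Fin (2 * n)) ℤ ⧸ relIdeal n

/-- The degree-2k homogeneous component of R_n (deg X_i = 2): the image of the
homogeneous polynomials of standard degree k. -/
def component (n k : ℕ) : AddSubgroup (Rn n) :=
  AddSubgroup.map (Ideal.Quotient.mk (relIdeal n)).toAddMonoidHom
    (homogeneousSubmodule (Fin (2 * n)) ℤ k).toAddSubgroup

/-- k-element subsets of {1,…,2n}. -/
abbrev SubK (n k : ℕ) := {I : Finset (Fin (2 * n)) // I.card = k}

/-- Z^n_k: the free abelian group on the symbols X_I, |I| = k. -/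
abbrev Zgp (n k : ℕ) := FreeAbelianGroup (SubK n k)

/-- The homomorphism Z^n_k → R_n sending the symbol X_I to the class of the
monomial X_I = ∏_{i∈I} X_i. -/
def phi (n k : ℕ) : Zgp n k →+ Rn n :=
  FreeAbelianGroup.lift fun I => Ideal.Quotient.mk (relIdeal n) (∏ i ∈ I.1, X i)

/-- The relations subgroup of Z^n_k: generated by Σ_{|I|=k, I⊇J} X_I over all
subsets J with |J| < k. -/
def relSub (n k : ℕ) : AddSubgroup (Zgp n k) :=
  AddSubgroup.closure
    {z | ∃ J : Finset (Fin (2 * n)), J.card < k ∧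
      z = ∑ I ∈ Finset.univ.filter (fun I : SubK n k => J ⊆ I.1), FreeAbelianGroup.of I}

-- ===== auxiliary material =====
namespace Stmt0

/-- Indicator finsupp of a finset. -/
def ind {n : ℕ} (I : Finset (Fin (2 * n))) : Fin (2 * n) →₀ ℕ :=
  ∑ i ∈ I, Finsupp.single i 1

lemma ind_apply {n : ℕ} (I : Finset (Fin (2 * n))) (j : Fin (2 * n)) :
    ind I j = if j ∈ I then 1 else 0 := by
  classical
  rw [ind, Finsupp.finset_sum_apply]
  simp [Finsupp.single_apply, Finset.sum_ite_eq' I j (fun _ => 1)]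

lemma ind_support {n : ℕ} (I : Finset (Fin (2 * n))) : (ind I).support = I := by
  ext j; simp [Finsupp.mem_support_iff, ind_apply]

lemma prod_X_eq {n : ℕ} (I : Finset (Fin (2 * n))) :
    (∏ i ∈ I, (X i : MvPolynomial (Fin (2 * n)) ℤ)) = monomial (ind I) 1 := by
  have h := MvPolynomial.prod_X_pow_eq_monomial (s := ind I) (R := ℤ)
  rw [ind_support] at h
  rw [← h]
  exact Finset.prod_congr rfl fun i hi => by rw [ind_apply, if_pos hi, pow_one]

def c0 (n k : ℕ) (m : Fin (2 * n) →₀ ℕ) : Zgp n k :=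
  if h : (∀ i, m i ≤ 1) ∧ m.support.card = k then FreeAbelianGroup.of ⟨m.support, h.2⟩ else 0

def zeta (n k : ℕ) : MvPolynomial (Fin (2 * n)) ℤ →+ Zgp n k :=
  (Finsupp.liftAddHom (fun m => (zmultiplesHom (Zgp n k) (c0 n k m)))).comp
    (AddMonoidAlgebra.coeffAddEquiv (R := ℤ) (M := Fin (2 * n) →₀ ℕ)).toAddMonoidHom

lemma zeta_monomial (n k : ℕ) (m : Fin (2 * n) →₀ ℕ) (a : ℤ) :
    zeta n k (monomial m a) = a • c0 n k m := by
  simp [zeta, MvPolynomial.monomial, AddMonoidAlgebra.coeffAddEquiv]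

def liftpoly (n k : ℕ) : Zgp n k →+ MvPolynomial (Fin (2 * n)) ℤ :=
  FreeAbelianGroup.lift fun I => ∏ i ∈ I.1, X i

lemma liftpoly_of (n k : ℕ) (I : SubK n k) :
    liftpoly n k (FreeAbelianGroup.of I) = ∏ i ∈ I.1, X i :=
  FreeAbelianGroup.lift_apply_of _ _

lemma phi_of (n k : ℕ) (I : SubK n k) :
    phi n k (FreeAbelianGroup.of I) = Ideal.Quotient.mk (relIdeal n) (∏ i ∈ I.1, X i) :=
  FreeAbelianGroup.lift_apply_of _ _

lemma phi_eq (n k : ℕ) (z : Zgp n k) :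
    phi n k z = Ideal.Quotient.mk (relIdeal n) (liftpoly n k z) := by
  induction z using FreeAbelianGroup.induction_on with
  | zero => simp
  | of I => rw [phi_of, liftpoly_of]
  | neg I h => rw [map_neg, map_neg, h, map_neg]
  | add z w hz hw => rw [map_add, map_add, hz, hw, map_add]

lemma zeta_liftpoly (n k : ℕ) (z : Zgp n k) : zeta n k (liftpoly n k z) = z := by
  induction z using FreeAbelianGroup.induction_on with
  | zero => simp
  | of I =>
      rw [liftpoly_of, prod_X_eq, zeta_monomial, one_smul, c0]
      have hsf : ∀ j, ind I.1 j ≤ 1 := fun j => by rw [ind_apply]; split <;> simp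
      rw [dif_pos ⟨hsf, by rw [ind_support]; exact I.2⟩]
      congr 1
      exact Subtype.ext (ind_support I.1)
  | neg I h => rw [map_neg, map_neg, h]
  | add z w hz hw => rw [map_add, map_add, hz, hw]

end Stmt0

namespace Stmt0

lemma sq_mem (n : ℕ) (i : Fin (2 * n)) : (X i : MvPolynomial (Fin (2 * n)) ℤ) ^ 2 ∈ relIdeal n :=
  Ideal.subset_span (Or.inl ⟨i, rfl⟩)

lemma esymm_mem (n r : ℕ) (h1 : 1 ≤ r) (h2 : r ≤ 2 * n) :
    (∑ S ∈ Finset.powersetCard r (Finset.univ : Finset (Fin (2 * n))), ∏ i ∈ S,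
      (X i : MvPolynomial (Fin (2 * n)) ℤ)) ∈ relIdeal n :=
  Ideal.subset_span (Or.inr ⟨r, h1, h2, rfl⟩)

lemma monomial_mem (n : ℕ) (m : Fin (2 * n) →₀ ℕ) (a : ℤ) (i : Fin (2 * n)) (h : 2 ≤ m i) :
    (monomial m a : MvPolynomial (Fin (2 * n)) ℤ) ∈ relIdeal n := by
  have hm : m - Finsupp.single i 2 + Finsupp.single i 2 = m := by
    ext j
    simp only [Finsupp.add_apply, Finsupp.tsub_apply, Finsupp.single_apply]
    by_cases hj : i = j
    · subst hj
      have h2 : (if i = i then 2 else 0) = 2 := if_pos rfl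
      omega
    · simp [hj]
  have key : (monomial m a : MvPolynomial (Fin (2 * n)) ℤ)
      = monomial (m - Finsupp.single i 2) a * X i ^ 2 := by
    rw [X_pow_eq_monomial, monomial_mul, mul_one, hm]
  rw [key]
  exact Ideal.mul_mem_left _ _ (sq_mem n i)

lemma c0_zero (n k : ℕ) (m : Fin (2 * n) →₀ ℕ) (i : Fin (2 * n)) (h : 2 ≤ m i) :
    c0 n k m = 0 := by
  rw [c0, dif_neg]
  rintro ⟨hsf, -⟩
  have := hsf i; omega

lemma support_add_ind {n : ℕ} (m : Fin (2 * n) →₀ ℕ) (S : Finset (Fin (2 * n))) :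
    (m + ind S).support = m.support ∪ S := by
  ext j
  simp only [Finsupp.mem_support_iff, Finsupp.add_apply, Finset.mem_union, ind_apply]
  split <;> simp_all <;> omega

/-- Reindexing: summing over r-subsets disjoint from J is the same as summing over
k-subsets containing J, via S ↦ J ∪ S. -/
lemma sum_reindex {M : Type*} [AddCommMonoid M] (n k : ℕ) (J : Finset (Fin (2 * n))) (r : ℕ)
    (hk : J.card + r = k) (f : Finset (Fin (2 * n)) → M) :
    ∑ S ∈ (Finset.powersetCard r (Finset.univ : Finset (Fin (2 * n)))).filter
        (fun S => Disjoint S J), f (J ∪ S)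
    = ∑ I ∈ Finset.univ.filter (fun I : SubK n k => J ⊆ I.1), f I.1 := by
  classical
  refine Finset.sum_bij' (fun S hS => (⟨J ∪ S, ?_⟩ : SubK n k))
    (fun I hI => I.1 \ J) ?_ ?_ ?_ ?_ ?_
  · rw [Finset.mem_filter, Finset.mem_powersetCard] at hS
    rw [Finset.card_union_of_disjoint (hS.2.symm), hS.1.2]
    exact hk
  · intro S hS
    exact Finset.mem_filter.mpr ⟨Finset.mem_univ _, Finset.subset_union_left⟩
  · intro I hI
    rw [Finset.mem_filter] at hI
    rw [Finset.mem_filter, Finset.mem_powersetCard]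
    refine ⟨⟨Finset.subset_univ _, ?_⟩, Finset.sdiff_disjoint⟩
    rw [Finset.card_sdiff_of_subset hI.2, I.2]
    omega
  · intro S hS
    rw [Finset.mem_filter] at hS
    exact Finset.union_sdiff_cancel_left hS.2.symm
  · intro I hI
    rw [Finset.mem_filter] at hI
    exact Subtype.ext (Finset.union_sdiff_of_subset hI.2)
  · intro S hS
    rfl

end Stmt0

namespace Stmt0

def fk (n k : ℕ) (A : Finset (Fin (2 * n))) : Zgp n k :=
  if h : A.card = k then FreeAbelianGroup.of (⟨A, h⟩ : SubK n k) else 0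

lemma fk_of_card {n k : ℕ} (A : Finset (Fin (2 * n))) (h : A.card = k) :
    fk n k A = FreeAbelianGroup.of (⟨A, h⟩ : SubK n k) := dif_pos h

def psi (n k : ℕ) : MvPolynomial (Fin (2 * n)) ℤ →+ Zgp n k ⧸ relSub n k :=
  (QuotientAddGroup.mk' (relSub n k)).comp (zeta n k)

lemma psi_monomial (n k : ℕ) (m : Fin (2 * n) →₀ ℕ) (a : ℤ) :
    psi n k (monomial m a) = a • (QuotientAddGroup.mk' (relSub n k) (c0 n k m)) := by
  rw [psi, AddMonoidHom.comp_apply, zeta_monomial, map_zsmul]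

lemma psi_mul_sq (n k : ℕ) (q : MvPolynomial (Fin (2 * n)) ℤ) (i : Fin (2 * n)) :
    psi n k (q * X i ^ 2) = 0 := by
  induction q using MvPolynomial.induction_on' with
  | add p q hp hq => rw [add_mul, map_add, hp, hq, add_zero]
  | monomial m a =>
      rw [X_pow_eq_monomial, monomial_mul, mul_one, psi_monomial,
        c0_zero n k _ i (by simp [Finsupp.add_apply])]
      simp

lemma psi_mul_esymm (n k : ℕ) (q : MvPolynomial (Fin (2 * n)) ℤ) (r : ℕ) (hr : 1 ≤ r) :
    psi n k (q * ∑ S ∈ Finset.powersetCard r (Finset.univ : Finset (Fin (2 * n))),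
      ∏ i ∈ S, X i) = 0 := by
  classical
  induction q using MvPolynomial.induction_on' with
  | add p q hp hq => rw [add_mul, map_add, hp, hq, add_zero]
  | monomial m a =>
    rw [Finset.mul_sum]
    have hterm : ∀ S ∈ Finset.powersetCard r (Finset.univ : Finset (Fin (2 * n))),
        (monomial m a : MvPolynomial (Fin (2 * n)) ℤ) * ∏ i ∈ S, X i
          = monomial (m + ind S) a := by
      intro S _
      rw [prod_X_eq, monomial_mul, mul_one]
    rw [Finset.sum_congr rfl hterm, map_sum]
    have hpsi : ∀ S, psi n k (monomial (m + ind S) a)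
        = a • (QuotientAddGroup.mk' (relSub n k) (c0 n k (m + ind S))) :=
      fun S => psi_monomial n k _ a
    rw [Finset.sum_congr rfl fun S _ => hpsi S, ← Finset.smul_sum,
      ← map_sum (QuotientAddGroup.mk' (relSub n k))]
    suffices h : (∑ S ∈ Finset.powersetCard r (Finset.univ : Finset (Fin (2 * n))),
        c0 n k (m + ind S)) ∈ relSub n k by
      have h0 : (QuotientAddGroup.mk' (relSub n k))
          (∑ S ∈ Finset.powersetCard r (Finset.univ : Finset (Fin (2 * n))),
            c0 n k (m + ind S)) = 0 := by
        rw [← QuotientAddGroup.ker_mk' (relSub n k)] at h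
        exact h
      rw [h0, smul_zero]
    by_cases hsf : ∀ i, m i ≤ 1
    · -- m squarefree; split the sum according to disjointness from J := m.support
      set J := m.support with hJ
      rw [← Finset.sum_filter_add_sum_filter_not _ (fun S => Disjoint S J)]
      have hbad : ∀ S ∈ (Finset.powersetCard r (Finset.univ : Finset (Fin (2 * n)))).filter
          (fun S => ¬ Disjoint S J), c0 n k (m + ind S) = 0 := by
        intro S hS
        rw [Finset.mem_filter] at hS
        obtain ⟨i, hiS, hiJ⟩ := Finset.not_disjoint_iff.mp hS.2
        refine c0_zero n k _ i ?_
        have h1 : 1 ≤ m i := Nat.one_le_iff_ne_zero.mpr (Finsupp.mem_support_iff.mp hiJ)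
        rw [Finsupp.add_apply, ind_apply, if_pos hiS]
        omega
      rw [Finset.sum_congr rfl hbad, Finset.sum_const_zero, add_zero]
      by_cases hcard : J.card + r = k
      · -- the interesting case: the sum is exactly a relation generator
        have hgood : ∀ S ∈ (Finset.powersetCard r (Finset.univ : Finset (Fin (2 * n)))).filter
            (fun S => Disjoint S J), c0 n k (m + ind S) = fk n k (J ∪ S) := by
          intro S hS
          rw [Finset.mem_filter, Finset.mem_powersetCard] at hS
          have hsupp : (m + ind S).support = J ∪ S := support_add_ind m S
          have hsf' : ∀ i, (m + ind S) i ≤ 1 := by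
            intro i
            rw [Finsupp.add_apply, ind_apply]
            by_cases hiS : i ∈ S
            · have : m i = 0 := by
                by_contra hmi
                exact (Finset.disjoint_left.mp hS.2 hiS) (Finsupp.mem_support_iff.mpr hmi)
              rw [if_pos hiS, this]
            · rw [if_neg hiS, add_zero]; exact hsf i
          have hc : (J ∪ S).card = k := by
            rw [Finset.card_union_of_disjoint hS.2.symm, hS.1.2]
            exact hcard
          rw [c0, dif_pos ⟨hsf', by rw [hsupp]; exact hc⟩, fk_of_card _ hc]
          exact congrArg _ (Subtype.ext hsupp)
        rw [Finset.sum_congr rfl hgood, sum_reindex n k J r hcard (fk n k)]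
        have hJk : J.card < k := by omega
        have hfin : ∀ I ∈ Finset.univ.filter (fun I : SubK n k => J ⊆ I.1),
            fk n k I.1 = FreeAbelianGroup.of I := by
          intro I _
          rw [fk_of_card _ I.2]
        rw [Finset.sum_congr rfl hfin]
        exact AddSubgroup.subset_closure ⟨J, hJk, rfl⟩
      · -- wrong degree: every term vanishes
        have hz : ∀ S ∈ (Finset.powersetCard r (Finset.univ : Finset (Fin (2 * n)))).filter
            (fun S => Disjoint S J), c0 n k (m + ind S) = 0 := by
          intro S hS
          rw [Finset.mem_filter, Finset.mem_powersetCard] at hS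
          rw [c0, dif_neg]
          rintro ⟨-, hc⟩
          rw [support_add_ind m S, Finset.card_union_of_disjoint hS.2.symm, hS.1.2] at hc
          exact hcard hc
        rw [Finset.sum_congr rfl hz, Finset.sum_const_zero]
        exact (relSub n k).zero_mem
    · -- m not squarefree: every term vanishes
      push_neg at hsf
      obtain ⟨i, hi⟩ := hsf
      have hz : ∀ S ∈ Finset.powersetCard r (Finset.univ : Finset (Fin (2 * n))),
          c0 n k (m + ind S) = 0 := by
        intro S _
        refine c0_zero n k _ i ?_
        rw [Finsupp.add_apply]
        omega
      rw [Finset.sum_congr rfl hz, Finset.sum_const_zero]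
      exact (relSub n k).zero_mem

lemma psi_ideal (n k : ℕ) {p : MvPolynomial (Fin (2 * n)) ℤ} (hp : p ∈ relIdeal n) :
    psi n k p = 0 := by
  have H : ∀ q, psi n k (q * p) = 0 := by
    induction hp using Submodule.span_induction with
    | mem x hx =>
        rcases hx with ⟨i, rfl⟩ | ⟨r, hr1, hr2, rfl⟩
        · exact fun q => psi_mul_sq n k q i
        · exact fun q => psi_mul_esymm n k q r hr1
    | zero => intro q; rw [mul_zero, map_zero]
    | add x y _ _ hx hy => intro q; rw [mul_add, map_add, hx, hy, add_zero]
    | smul a x _ hx => intro q; rw [smul_eq_mul, ← mul_assoc]; exact hx _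
  simpa using H 1

end Stmt0

namespace Stmt0

lemma ker_eq (n k : ℕ) : (phi n k).ker = relSub n k := by
  classical
  apply le_antisymm
  · intro z hz
    rw [AddMonoidHom.mem_ker, phi_eq] at hz
    have hmem : liftpoly n k z ∈ relIdeal n := Ideal.Quotient.eq_zero_iff_mem.mp hz
    have h2 := psi_ideal n k hmem
    rw [psi, AddMonoidHom.comp_apply, zeta_liftpoly] at h2
    rw [← QuotientAddGroup.ker_mk' (relSub n k)]
    exact h2
  · rw [relSub, AddSubgroup.closure_le]
    rintro z ⟨J, hJ, rfl⟩
    simp only [SetLike.mem_coe, AddMonoidHom.mem_ker, map_sum]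
    have hof : ∀ I ∈ Finset.univ.filter (fun I : SubK n k => J ⊆ I.1),
        phi n k (FreeAbelianGroup.of I)
          = Ideal.Quotient.mk (relIdeal n) (∏ i ∈ I.1, X i) := fun I _ => phi_of n k I
    rw [Finset.sum_congr rfl hof, ← map_sum]
    rw [Ideal.Quotient.eq_zero_iff_mem]
    by_cases hk2n : k ≤ 2 * n
    · set r := k - J.card with hr
      have hr1 : 1 ≤ r := by omega
      have hrk : J.card + r = k := by omega
      have hre := (sum_reindex n k J r hrk
        (fun A => ∏ i ∈ A, (X i : MvPolynomial (Fin (2 * n)) ℤ))).symm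
      rw [hre]
      have hsplit : ∀ S ∈ (Finset.powersetCard r (Finset.univ : Finset (Fin (2 * n)))).filter
          (fun S => Disjoint S J),
          (∏ i ∈ J ∪ S, (X i : MvPolynomial (Fin (2 * n)) ℤ))
            = (∏ i ∈ J, X i) * ∏ i ∈ S, X i := by
        intro S hS
        rw [Finset.mem_filter] at hS
        exact Finset.prod_union hS.2.symm
      rw [Finset.sum_congr rfl hsplit, ← Finset.mul_sum]
      have hdecomp : (∏ i ∈ J, (X i : MvPolynomial (Fin (2 * n)) ℤ)) *
            ∑ S ∈ (Finset.powersetCard r (Finset.univ : Finset (Fin (2 * n)))).filter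
              (fun S => Disjoint S J), ∏ i ∈ S, X i
          = (∏ i ∈ J, X i) *
              (∑ S ∈ Finset.powersetCard r (Finset.univ : Finset (Fin (2 * n))), ∏ i ∈ S, X i)
            - (∏ i ∈ J, X i) *
              ∑ S ∈ (Finset.powersetCard r (Finset.univ : Finset (Fin (2 * n)))).filter
                (fun S => ¬ Disjoint S J), ∏ i ∈ S, X i := by
        rw [← Finset.sum_filter_add_sum_filter_not
          (Finset.powersetCard r (Finset.univ : Finset (Fin (2 * n))))
          (fun S => Disjoint S J) (fun S => ∏ i ∈ S, (X i : MvPolynomial (Fin (2 * n)) ℤ))]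
        ring
      rw [hdecomp]
      refine Submodule.sub_mem _ (Ideal.mul_mem_left _ _ (esymm_mem n r hr1 (by omega))) ?_
      rw [Finset.mul_sum]
      refine Submodule.sum_mem _ ?_
      intro S hS
      rw [Finset.mem_filter] at hS
      obtain ⟨i, hiS, hiJ⟩ := Finset.not_disjoint_iff.mp hS.2
      rw [prod_X_eq, prod_X_eq, monomial_mul, mul_one]
      refine monomial_mem n _ _ i ?_
      rw [Finsupp.add_apply, ind_apply, ind_apply, if_pos hiJ, if_pos hiS]
    · -- k > 2n : there are no k-subsets, the sum is empty
      haveI : IsEmpty (SubK n k) := by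
        refine ⟨fun I => ?_⟩
        have h1 : I.1.card ≤ Fintype.card (Fin (2 * n)) := Finset.card_le_univ I.1
        rw [I.2, Fintype.card_fin] at h1
        omega
      rw [Finset.univ_eq_empty, Finset.filter_empty, Finset.sum_empty]
      exact Submodule.zero_mem _

lemma liftpoly_mem (n k : ℕ) (z : Zgp n k) :
    liftpoly n k z ∈ homogeneousSubmodule (Fin (2 * n)) ℤ k := by
  induction z using FreeAbelianGroup.induction_on with
  | zero => simp only [map_zero]; exact Submodule.zero_mem _
  | of I =>
      rw [liftpoly_of, prod_X_eq, mem_homogeneousSubmodule]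
      refine isHomogeneous_monomial _ ?_
      rw [Finsupp.degree_apply, ind_support]
      have : ∀ i ∈ I.1, ind I.1 i = 1 := fun i hi => by rw [ind_apply, if_pos hi]
      rw [Finset.sum_congr rfl this, Finset.sum_const, smul_eq_mul, mul_one]
      exact I.2
  | neg I h => rw [map_neg]; exact Submodule.neg_mem _ h
  | add z w hz hw => rw [map_add]; exact Submodule.add_mem _ hz hw

lemma mk_monomial_eq (n k : ℕ) (m : Fin (2 * n) →₀ ℕ) (a : ℤ) (hm : m.degree = k) :
    Ideal.Quotient.mk (relIdeal n) (monomial m a) = phi n k (zeta n k (monomial m a)) := by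
  rw [zeta_monomial, map_zsmul]
  by_cases hsf : ∀ i, m i ≤ 1
  · have hone : ∀ i ∈ m.support, m i = 1 := by
      intro i hi
      have := hsf i
      have := Finsupp.mem_support_iff.mp hi
      omega
    have hcard : m.support.card = k := by
      rw [← hm, Finsupp.degree_apply, Finset.sum_congr rfl hone, Finset.sum_const, smul_eq_mul,
        mul_one]
    rw [c0, dif_pos ⟨hsf, hcard⟩, phi_of, prod_X_eq]
    have hind : ind m.support = m := by
      ext j
      rw [ind_apply]
      by_cases hj : j ∈ m.support
      · rw [if_pos hj, hone j hj]
      · rw [if_neg hj]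
        exact (Finsupp.notMem_support_iff.mp hj).symm
    rw [hind, ← map_zsmul, smul_monomial, smul_eq_mul, mul_one]
  · push_neg at hsf
    obtain ⟨i, hi⟩ := hsf
    rw [c0_zero n k m i hi, map_zero, smul_zero]
    exact Ideal.Quotient.eq_zero_iff_mem.mpr (monomial_mem n m a i hi)

lemma mk_eq_phi_zeta (n k : ℕ) (p : MvPolynomial (Fin (2 * n)) ℤ)
    (hp : p.IsHomogeneous k) :
    Ideal.Quotient.mk (relIdeal n) p = phi n k (zeta n k p) := by
  conv_lhs => rw [p.as_sum]
  conv_rhs => rw [p.as_sum]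
  rw [map_sum, map_sum, map_sum]
  refine Finset.sum_congr rfl ?_
  intro m hm
  refine mk_monomial_eq n k m _ ?_
  by_contra hne
  exact Finsupp.mem_support_iff.mp hm (hp.coeff_eq_zero hne)

lemma range_eq (n k : ℕ) : (phi n k).range = component n k := by
  apply le_antisymm
  · rintro x ⟨z, rfl⟩
    rw [phi_eq]
    exact ⟨liftpoly n k z, liftpoly_mem n k z, rfl⟩
  · rintro x ⟨p, hp, rfl⟩
    exact ⟨zeta n k p, (mk_eq_phi_zeta n k p hp).symm⟩

end Stmt0


/-- The induced map Z̄^n_k → (R_n)_{2k} is well defined and an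
isomorphism of abelian groups: the kernel of φ is exactly the relations subgroup,
and the range of φ is exactly the degree-2k component of R_n. -/
theorem stmt0 (n k : ℕ) (hn : 1 ≤ n) :
    (phi n k).ker = relSub n k ∧ (phi n k).range = component n k :=
  ⟨Stmt0.ker_eq n k, Stmt0.range_eq n k⟩

end
end

section
/- Let n ≥ 1, let m be a partial matching of {1,…,2n} of cardinality k, and let J ⊆ {1,…,2n} be any subset with |J| < k. Then Σ_I f_m(I) = 0, where the sum runs over all k-element subsets I ⊆ {1,…,2n} with J ⊆ I. -/
/-!
Context: A partial matching of {1,…,2n} of cardinality k is a collection of k ordered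
pairs of elements of {1,…,2n} whose 2k entries are pairwise distinct.  For such a
matching m and a k-element subset I, f_m(I) = ∏ ε_s if I contains exactly one element
of each pair (ε_s = +1 if the first element of pair s is in I, −1 if the second is),
and f_m(I) = 0 otherwise.  (We model {1,…,2n} by Fin (2n).)

Statement 3:  If m is a partial matching of cardinality k and J ⊆ {1,…,2n} has
|J| < k, then Σ_{|I|=k, J⊆I} f_m(I) = 0.
-/

/-- m is a partial matching: all 2k entries of the k pairs are pairwise distinct. -/
def isMatching (n k : ℕ) (m : Fin k → Fin (2 * n) × Fin (2 * n)) : Prop :=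
  Function.Injective
    (Sum.elim (fun s => (m s).1) (fun s => (m s).2) : Fin k ⊕ Fin k → Fin (2 * n))

/-- The value f_m(I): the product of the signs ε_s if I contains exactly one element
from each pair of m, and 0 otherwise. -/
def fm (n k : ℕ) (m : Fin k → Fin (2 * n) × Fin (2 * n)) (I : Finset (Fin (2 * n))) : ℤ :=
  if ∀ s : Fin k, ((m s).1 ∈ I ∧ (m s).2 ∉ I) ∨ ((m s).1 ∉ I ∧ (m s).2 ∈ I) then
    ∏ s : Fin k, (if (m s).1 ∈ I then (1 : ℤ) else -1)
  else 0

/-- For a partial matching m of {1,…,2n} of cardinality k and any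
subset J with |J| < k, the sum of f_m(I) over all k-element subsets I containing J
vanishes. -/
theorem stmt3 (n k : ℕ) (hn : 1 ≤ n) (m : Fin k → Fin (2 * n) × Fin (2 * n))
    (hm : isMatching n k m) (J : Finset (Fin (2 * n))) (hJ : J.card < k) :
    ∑ I ∈ (Finset.powersetCard k (Finset.univ : Finset (Fin (2 * n)))).filter
        (fun I => J ⊆ I), fm n k m I = 0 := by
  classical
  -- basic consequences of injectivity
  have hm1 : ∀ s t : Fin k, (m s).1 = (m t).1 → s = t := by
    intro s t h
    have := hm (a₁ := Sum.inl s) (a₂ := Sum.inl t) h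
    simpa using this
  have hm2 : ∀ s t : Fin k, (m s).2 = (m t).2 → s = t := by
    intro s t h
    have := hm (a₁ := Sum.inr s) (a₂ := Sum.inr t) h
    simpa using this
  have hm12 : ∀ s t : Fin k, (m s).1 ≠ (m t).2 := by
    intro s t h
    have := hm (a₁ := Sum.inl s) (a₂ := Sum.inr t) h
    simpa using this
  -- find a pair disjoint from J
  obtain ⟨s₀, hs₀1, hs₀2⟩ : ∃ s : Fin k, (m s).1 ∉ J ∧ (m s).2 ∉ J := by
    by_contra hc
    push_neg at hc
    set φ : Fin k → Fin (2 * n) := fun s => if (m s).1 ∈ J then (m s).1 else (m s).2 with hφ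
    have hmem : ∀ s ∈ (Finset.univ : Finset (Fin k)), φ s ∈ J := by
      intro s _
      by_cases h : (m s).1 ∈ J
      · simp [hφ, h]
      · simp [hφ, h, hc s h]
    have hinj : Set.InjOn φ (Finset.univ : Finset (Fin k)) := by
      intro s _ t _ h
      simp only [hφ] at h
      by_cases h1 : (m s).1 ∈ J <;> by_cases h2 : (m t).1 ∈ J <;>
        simp only [h1, h2, if_pos, if_neg, if_true, if_false] at h
      · exact hm1 s t h
      · exact absurd h (hm12 s t)
      · exact absurd h.symm (hm12 t s)
      · exact hm2 s t h
    have := Finset.card_le_card_of_injOn φ hmem hinj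
    simp only [Finset.card_univ, Fintype.card_fin] at this
    omega
  set a := (m s₀).1 with ha
  set b := (m s₀).2 with hb
  have hab : a ≠ b := hm12 s₀ s₀
  set e := Equiv.swap a b with he
  -- the swap involution
  have hmemmap : ∀ (I : Finset (Fin (2 * n))) (x : Fin (2 * n)),
      x ∈ I.map e.toEmbedding ↔ e x ∈ I := by
    intro I x
    rw [Finset.mem_map_equiv, he, Equiv.symm_swap]
  -- swap fixes entries of other pairs
  have hfix : ∀ s : Fin k, s ≠ s₀ → e (m s).1 = (m s).1 ∧ e (m s).2 = (m s).2 := by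
    intro s hs
    constructor
    · apply Equiv.swap_apply_of_ne_of_ne
      · exact fun h => hs (hm1 s s₀ h)
      · exact hm12 s s₀
    · apply Equiv.swap_apply_of_ne_of_ne
      · exact fun h => hm12 s₀ s h.symm
      · exact fun h => hs (hm2 s s₀ h)
  have hkey : ∀ (I : Finset (Fin (2 * n))) (s : Fin k), s ≠ s₀ →
      ((m s).1 ∈ I.map e.toEmbedding ↔ (m s).1 ∈ I) ∧
      ((m s).2 ∈ I.map e.toEmbedding ↔ (m s).2 ∈ I) := by
    intro I s hs
    rw [hmemmap, hmemmap, (hfix s hs).1, (hfix s hs).2]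
    exact ⟨Iff.rfl, Iff.rfl⟩
  have hkeya : ∀ I : Finset (Fin (2 * n)), (a ∈ I.map e.toEmbedding ↔ b ∈ I) := by
    intro I; rw [hmemmap, he, Equiv.swap_apply_left]
  have hkeyb : ∀ I : Finset (Fin (2 * n)), (b ∈ I.map e.toEmbedding ↔ a ∈ I) := by
    intro I; rw [hmemmap, he, Equiv.swap_apply_right]
  set P : Finset (Fin (2 * n)) → Prop := fun I =>
    ∀ s : Fin k, ((m s).1 ∈ I ∧ (m s).2 ∉ I) ∨ ((m s).1 ∉ I ∧ (m s).2 ∈ I) with hP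
  have hPiff : ∀ I, P (I.map e.toEmbedding) ↔ P I := by
    intro I
    constructor <;> intro h s
    · by_cases hs : s = s₀
      · subst hs
        rcases h s with h' | h'
        · rw [← ha, ← hb, hkeya, hkeyb] at h'
          exact Or.inr ⟨h'.2, h'.1⟩
        · rw [← ha, ← hb, hkeya, hkeyb] at h'
          exact Or.inl ⟨h'.2, h'.1⟩
      · rcases h s with h' | h'
        · rw [(hkey I s hs).1, (hkey I s hs).2] at h'
          exact Or.inl h'
        · rw [(hkey I s hs).1, (hkey I s hs).2] at h'
          exact Or.inr h'
    · by_cases hs : s = s₀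
      · subst hs
        rcases h s with h' | h'
        · exact Or.inr ⟨by rw [← ha, hkeya]; exact h'.2, by rw [← hb, hkeyb]; exact h'.1⟩
        · exact Or.inl ⟨by rw [← ha, hkeya]; exact h'.2, by rw [← hb, hkeyb]; exact h'.1⟩
      · rcases h s with h' | h'
        · exact Or.inl ⟨by rw [(hkey I s hs).1]; exact h'.1, by rw [(hkey I s hs).2]; exact h'.2⟩
        · exact Or.inr ⟨by rw [(hkey I s hs).1]; exact h'.1, by rw [(hkey I s hs).2]; exact h'.2⟩
  apply Finset.sum_involution (g := fun I _ => I.map e.toEmbedding)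
  · -- f a + f (g a) = 0
    intro I hI
    by_cases hPI : P I
    · have hPI' : P (I.map e.toEmbedding) := (hPiff I).mpr hPI
      rw [fm, fm, if_pos hPI, if_pos hPI']
      rw [← Finset.prod_erase_mul _ _ (Finset.mem_univ s₀),
          ← Finset.prod_erase_mul _ _ (Finset.mem_univ s₀)]
      have hprod : ∏ s ∈ Finset.univ.erase s₀, (if (m s).1 ∈ I then (1 : ℤ) else -1) =
          ∏ s ∈ Finset.univ.erase s₀, (if (m s).1 ∈ I.map e.toEmbedding then (1 : ℤ) else -1) := by
        apply Finset.prod_congr rfl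
        intro s hs
        exact if_congr ((hkey I s (Finset.ne_of_mem_erase hs)).1).symm rfl rfl
      rw [← hprod]
      have hlast : (if (m s₀).1 ∈ I then (1 : ℤ) else -1) +
          (if (m s₀).1 ∈ I.map e.toEmbedding then (1 : ℤ) else -1) = 0 := by
        rcases hPI s₀ with h' | h' <;> rw [← ha, ← hb] at h' <;>
          simp [← ha, hmemmap, he, Equiv.swap_apply_left, h'.1, h'.2]
      rw [← mul_add, hlast, mul_zero]
    · have hPI' : ¬ P (I.map e.toEmbedding) := fun h => hPI ((hPiff I).mp h)
      rw [fm, fm, if_neg hPI, if_neg hPI', add_zero]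
  · -- g a ≠ a when f a ≠ 0
    intro I hI hfI
    have hPI : P I := by
      by_contra h
      rw [fm, if_neg h] at hfI
      exact hfI rfl
    intro hEq
    rcases hPI s₀ with h' | h'
    · rw [← ha, ← hb] at h'
      have : b ∈ I := by rw [← hEq, hkeyb]; exact h'.1
      exact h'.2 this
    · rw [← ha, ← hb] at h'
      have : a ∈ I := by rw [← hEq, hkeya]; exact h'.2
      exact h'.1 this
  · -- involution
    intro I hI
    ext x
    rw [hmemmap, hmemmap]
    simp [he]
  · -- g a ∈ s
    intro I hI
    rw [Finset.mem_filter, Finset.mem_powersetCard] at hI ⊢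
    refine ⟨⟨Finset.subset_univ _, by rw [Finset.card_map]; exact hI.1.2⟩, ?_⟩
    · intro x hx
      rw [hmemmap]
      have hex : e x = x := Equiv.swap_apply_of_ne_of_ne
        (fun h => hs₀1 (h ▸ hx)) (fun h => hs₀2 (h ▸ hx))
      rw [hex]
      exact hI.2 hx
end

section
/- Let n ≥ 1 and 0 ≤ k ≤ n. Suppose an integer a_I is given for each admissible k-element subset I ⊆ {1,…,2n}, and that Σ_I a_I f_m(I) = 0 (sum over all admissible k-element subsets I) for every partial matching m of {1,…,2n} of cardinality k. Then a_I = 0 for every admissible k-element subset I. -/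
/-- Admissibility: |I ∩ {1,…,m}| ≤ m/2 for all m = 1,…,2n. -/
def admissible (n : ℕ) (I : Finset (Fin (2 * n))) : Prop :=
  ∀ m ∈ Finset.Icc 1 (2 * n), 2 * (I.filter fun i : Fin (2 * n) => (i : ℕ) + 1 ≤ m).card ≤ m

instance (n : ℕ) : DecidablePred (admissible n) := fun I => by
  unfold admissible; infer_instance


lemma exists_good_inj (n : ℕ) (I : Finset (Fin (2 * n))) (hI : admissible n I) :
    ∃ φ : I → Fin (2 * n), Function.Injective φ ∧
      ∀ i : I, φ i ∉ I ∧ (φ i : ℕ) < ((i : Fin (2 * n)) : ℕ) := by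
  classical
  set t : I → Finset (Fin (2 * n)) :=
    fun i => Finset.univ.filter (fun j => j ∉ I ∧ (j : ℕ) < ((i : Fin (2 * n)) : ℕ)) with ht
  have hall : ∀ s : Finset I, s.card ≤ (s.biUnion t).card := by
    intro s
    rcases s.eq_empty_or_nonempty with rfl | hs
    · simp
    · set i₀ : I := s.max' hs with hi₀
      set v : ℕ := ((i₀ : Fin (2 * n)) : ℕ) with hv
      have hv2n : v < 2 * n := (i₀ : Fin (2 * n)).isLt
      have hadm := hI (v + 1) (by simp [Finset.mem_Icc]; omega)
      have hTpred : (I.filter fun i : Fin (2 * n) => (i : ℕ) + 1 ≤ v + 1)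
          = I.filter fun i : Fin (2 * n) => (i : ℕ) ≤ v := by
        apply Finset.filter_congr; intro x _; simp
      rw [hTpred] at hadm
      set T := I.filter fun i : Fin (2 * n) => (i : ℕ) ≤ v with hT
      -- s.card ≤ T.card
      have h1 : s.card ≤ T.card := by
        rw [← Finset.card_image_of_injective s Subtype.coe_injective]
        apply Finset.card_le_card
        intro x hx
        simp only [Finset.mem_image] at hx
        obtain ⟨i, hi, rfl⟩ := hx
        simp only [hT, Finset.mem_filter]
        refine ⟨i.2, ?_⟩
        have := s.le_max' i hi
        exact this
      set L := Finset.univ.filter (fun j : Fin (2 * n) => (j : ℕ) < v) with hL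
      have Lcard : L.card = v := by
        rw [← Finset.card_range v]
        refine Finset.card_bij (fun j _ => (j : ℕ)) ?_ ?_ ?_
        · intro a ha; simp only [hL, Finset.mem_filter] at ha
          simpa using ha.2
        · intro a ha b hb hab; exact Fin.val_injective hab
        · intro b hb
          simp only [Finset.mem_range] at hb
          exact ⟨⟨b, lt_trans hb hv2n⟩, by simp [hL, hb], rfl⟩
      have hsplit := Finset.card_filter_add_card_filter_not
        (s := L) (p := fun j => j ∈ I)
      have e1 : L.filter (fun j => j ∉ I) = t i₀ := by
        ext j
        simp only [ht, hL, Finset.mem_filter, Finset.mem_univ, true_and]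
        exact ⟨fun h => ⟨h.2, h.1⟩, fun h => ⟨h.2, h.1⟩⟩
      have e2 : L.filter (fun j => j ∈ I) = I.filter (fun j : Fin (2 * n) => (j : ℕ) < v) := by
        ext j; simp [hL, and_comm]
      have e3 : T = insert (i₀ : Fin (2 * n)) (I.filter fun j : Fin (2 * n) => (j : ℕ) < v) := by
        ext j
        simp only [hT, Finset.mem_filter, Finset.mem_insert]
        constructor
        · rintro ⟨hj, hle⟩
          rcases lt_or_eq_of_le hle with h | h
          · exact Or.inr ⟨hj, h⟩
          · exact Or.inl (Fin.ext h)
        · rintro (rfl | ⟨hj, hlt⟩)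
          · exact ⟨i₀.2, le_refl _⟩
          · exact ⟨hj, le_of_lt hlt⟩
      have hnotmem : (i₀ : Fin (2 * n)) ∉ (I.filter fun j : Fin (2 * n) => (j : ℕ) < v) := by
        simp [hv]
      have e4 : T.card = (I.filter fun j : Fin (2 * n) => (j : ℕ) < v).card + 1 := by
        rw [e3, Finset.card_insert_of_notMem hnotmem]
      have hsub : t i₀ ⊆ s.biUnion t := Finset.subset_biUnion_of_mem t (s.max'_mem hs)
      have h2 : (t i₀).card ≤ (s.biUnion t).card := Finset.card_le_card hsub
      rw [e1, e2] at hsplit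
      rw [Lcard] at hsplit
      omega
  obtain ⟨f, hfi, hf⟩ := (Finset.all_card_le_biUnion_card_iff_exists_injective t).mp hall
  refine ⟨f, hfi, fun i => ?_⟩
  have := hf i
  simp only [ht, Finset.mem_filter] at this
  exact this.2

/-- If Σ a_I f_m(I) = 0, summing over admissible k-element subsets
I, for every partial matching m of cardinality k, then a_I = 0 for every admissible
k-element subset I. -/
theorem stmt4 (n k : ℕ) (hn : 1 ≤ n) (hk : k ≤ n) (a : Finset (Fin (2 * n)) → ℤ)
    (h : ∀ m : Fin k → Fin (2 * n) × Fin (2 * n), isMatching n k m →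
      ∑ I ∈ (Finset.powersetCard k (Finset.univ : Finset (Fin (2 * n)))).filter
          (admissible n), a I * fm n k m I = 0) :
    ∀ I : Finset (Fin (2 * n)), I.card = k → admissible n I → a I = 0 := by
  classical
  suffices H : ∀ N : ℕ, ∀ I : Finset (Fin (2 * n)), (∑ x ∈ I, (x : ℕ)) = N →
      I.card = k → admissible n I → a I = 0 by
    intro I hIc hIa; exact H _ I rfl hIc hIa
  intro N
  induction N using Nat.strong_induction_on with
  | _ N IH =>
  intro I hN hIc hIa
  obtain ⟨φ, hφinj, hφ⟩ := exists_good_inj n I hIa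
  set e : Fin k → I := ⇑(I.equivFinOfCardEq hIc).symm with he
  have heinj : Function.Injective e := (I.equivFinOfCardEq hIc).symm.injective
  set m : Fin k → Fin (2 * n) × Fin (2 * n) := fun s => ((e s : Fin (2 * n)), φ (e s)) with hm
  have hmatch : isMatching n k m := by
    intro x y hxy
    match x, y with
    | Sum.inl s, Sum.inl s' =>
      simp only [Sum.elim_inl, hm] at hxy
      exact congrArg Sum.inl (heinj (Subtype.coe_injective hxy))
    | Sum.inl s, Sum.inr s' =>
      simp only [Sum.elim_inl, Sum.elim_inr, hm] at hxy
      exact absurd (e s).2 (by rw [hxy]; exact (hφ (e s')).1)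
    | Sum.inr s, Sum.inl s' =>
      simp only [Sum.elim_inl, Sum.elim_inr, hm] at hxy
      exact absurd (e s').2 (by rw [← hxy]; exact (hφ (e s)).1)
    | Sum.inr s, Sum.inr s' =>
      simp only [Sum.elim_inr, hm] at hxy
      exact congrArg Sum.inr (heinj (hφinj hxy))
  have himage1 : Finset.univ.image (fun s => (m s).1) = I := by
    ext x
    simp only [Finset.mem_image, Finset.mem_univ, true_and, hm]
    constructor
    · rintro ⟨s, rfl⟩; exact (e s).2
    · intro hx
      refine ⟨(I.equivFinOfCardEq hIc) ⟨x, hx⟩, ?_⟩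
      simp [he]
  have hfmI : fm n k m I = 1 := by
    unfold fm
    rw [if_pos]
    · apply Finset.prod_eq_one
      intro s _
      rw [if_pos (e s).2]
    · intro s; exact Or.inl ⟨(e s).2, (hφ (e s)).1⟩
  have hImem : I ∈ (Finset.powersetCard k (Finset.univ : Finset (Fin (2 * n)))).filter
      (admissible n) := by
    simp only [Finset.mem_filter, Finset.mem_powersetCard]
    exact ⟨⟨Finset.subset_univ I, hIc⟩, hIa⟩
  have key : ∀ J ∈ (Finset.powersetCard k (Finset.univ : Finset (Fin (2 * n)))).filter
      (admissible n), J ≠ I → a J * fm n k m J = 0 := by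
    intro J hJ hne
    by_cases hfm : fm n k m J = 0
    · rw [hfm, mul_zero]
    have hJ' : J.card = k ∧ admissible n J := by
      simp only [Finset.mem_filter, Finset.mem_powersetCard] at hJ
      exact ⟨hJ.1.2, hJ.2⟩
    have hC : ∀ s : Fin k, ((m s).1 ∈ J ∧ (m s).2 ∉ J) ∨ ((m s).1 ∉ J ∧ (m s).2 ∈ J) := by
      by_contra hC
      unfold fm at hfm
      rw [if_neg hC] at hfm
      exact hfm rfl
    set c : Fin k → Fin (2 * n) := fun s => if (m s).1 ∈ J then (m s).1 else (m s).2 with hc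
    have hcJ : ∀ s, c s ∈ J := by
      intro s
      rcases hC s with ⟨h1, _⟩ | ⟨h1, h2⟩
      · simp [hc, h1]
      · simp [hc, h1, h2]
    have hcases : ∀ s, c s = (m s).1 ∨ c s = (m s).2 := by
      intro s; by_cases h1 : (m s).1 ∈ J
      · left; simp [hc, h1]
      · right; simp [hc, h1]
    have hcinj : Function.Injective c := by
      intro s s' hss
      rcases hcases s with h1 | h1 <;> rcases hcases s' with h2 | h2 <;>
        rw [h1, h2] at hss
      · exact Sum.inl.inj (hmatch (show (Sum.elim (fun s => (m s).1) (fun s => (m s).2))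
          (Sum.inl s) = _ from hss))
      · exact absurd (hmatch (show (Sum.elim (fun s => (m s).1) (fun s => (m s).2))
          (Sum.inl s) = Sum.elim _ _ (Sum.inr s') from hss)) (by simp)
      · exact absurd (hmatch (show (Sum.elim (fun s => (m s).1) (fun s => (m s).2))
          (Sum.inr s) = Sum.elim _ _ (Sum.inl s') from hss)) (by simp)
      · exact Sum.inr.inj (hmatch (show (Sum.elim (fun s => (m s).1) (fun s => (m s).2))
          (Sum.inr s) = Sum.elim _ _ (Sum.inr s') from hss))
    have himgc : Finset.univ.image c = J := by
      apply Finset.eq_of_subset_of_card_le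
      · intro x hx
        simp only [Finset.mem_image, Finset.mem_univ, true_and] at hx
        obtain ⟨s, rfl⟩ := hx
        exact hcJ s
      · rw [Finset.card_image_of_injective _ hcinj, Finset.card_univ, Fintype.card_fin, hJ'.1]
    have hsumJ : (∑ x ∈ J, (x : ℕ)) = ∑ s : Fin k, (c s : ℕ) := by
      rw [← himgc, Finset.sum_image (fun x _ y _ hxy => hcinj hxy)]
    have hsumI : (∑ x ∈ I, (x : ℕ)) = ∑ s : Fin k, ((m s).1 : ℕ) := by
      rw [← himage1, Finset.sum_image]
      intro x _ y _ hxy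
      simp only [hm] at hxy
      exact heinj (Subtype.coe_injective hxy)
    have hex : ∃ s : Fin k, c s ≠ (m s).1 := by
      by_contra hall
      push_neg at hall
      apply hne
      rw [← himgc, ← himage1]
      apply Finset.image_congr
      intro s _
      exact hall s
    obtain ⟨s₀, hs₀⟩ := hex
    have hlt : (∑ s : Fin k, (c s : ℕ)) < ∑ s : Fin k, ((m s).1 : ℕ) := by
      apply Finset.sum_lt_sum
      · intro s _
        rcases hcases s with h1 | h1
        · rw [h1]
        · rw [h1]
          exact le_of_lt (hφ (e s)).2
      · refine ⟨s₀, Finset.mem_univ _, ?_⟩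
        have h1 : c s₀ = (m s₀).2 := (hcases s₀).resolve_left hs₀
        rw [h1]
        exact (hφ (e s₀)).2
    have : a J = 0 := by
      apply IH (∑ x ∈ J, (x : ℕ)) _ J rfl hJ'.1 hJ'.2
      rw [hsumJ, ← hN, hsumI]
      exact hlt
    rw [this, zero_mul]
  have hsum := h m hmatch
  rw [Finset.sum_eq_single_of_mem I hImem key, hfmI, mul_one] at hsum
  exact hsum
end

section
/- Let n ≥ 1 and let m be a partial matching of {1,…,2n} of cardinality k. Then, as a ℤ-valued function on the k-element subsets of {1,…,2n}, f_m is an integer linear combination of the functions f_{m'}, where m' ranges over the balanced partial matchings of {1,…,2n} of cardinality k. -/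
/-- m is balanced: in each pair, exactly one of the two entries is odd. -/
def isBalanced (n k : ℕ) (m : Fin k → Fin (2 * n) × Fin (2 * n)) : Prop :=
  ∀ s : Fin k, ((m s).1 : ℕ) % 2 ≠ ((m s).2 : ℕ) % 2

instance (n k : ℕ) (m : Fin k → Fin (2 * n) × Fin (2 * n)) : Decidable (isMatching n k m) := by
  unfold isMatching; infer_instance

instance (n k : ℕ) (m : Fin k → Fin (2 * n) × Fin (2 * n)) : Decidable (isBalanced n k m) := by
  unfold isBalanced; infer_instance

namespace Stmt5Aux

variable {n k : ℕ}

/-- signed indicator of a pair -/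
def g (p : Fin (2*n) × Fin (2*n)) (I : Finset (Fin (2*n))) : ℤ :=
  (if p.1 ∈ I then 1 else 0) - (if p.2 ∈ I then 1 else 0)

lemma fm_eq_prod (m : Fin k → Fin (2*n) × Fin (2*n)) (I : Finset (Fin (2*n))) :
    fm n k m I = ∏ s : Fin k, g (m s) I := by
  unfold fm
  by_cases h : ∀ s : Fin k, ((m s).1 ∈ I ∧ (m s).2 ∉ I) ∨ ((m s).1 ∉ I ∧ (m s).2 ∈ I)
  · rw [if_pos h]
    refine Finset.prod_congr rfl fun s _ => ?_
    rcases h s with ⟨h1, h2⟩ | ⟨h1, h2⟩ <;> simp [g, h1, h2]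
  · rw [if_neg h]
    push_neg at h
    obtain ⟨s, hs⟩ := h
    refine (Finset.prod_eq_zero (Finset.mem_univ s) ?_).symm
    by_cases h1 : (m s).1 ∈ I <;> by_cases h2 : (m s).2 ∈ I <;>
      simp [g, h1, h2] at hs ⊢

/-- the entries map -/
def Em (m : Fin k → Fin (2*n) × Fin (2*n)) : Fin k ⊕ Fin k → Fin (2*n) :=
  Sum.elim (fun s => (m s).1) (fun s => (m s).2)

lemma isMatching_iff (m : Fin k → Fin (2*n) × Fin (2*n)) :
    isMatching n k m ↔ Function.Injective (Em m) := Iff.rfl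

lemma inj_update {α β : Type*} [DecidableEq α] {f : α → β} (hf : Function.Injective f)
    (a : α) (b : β) (hb : ∀ x, f x ≠ b) : Function.Injective (Function.update f a b) := by
  intro x y h
  by_cases hx : x = a <;> by_cases hy : y = a
  · rw [hx, hy]
  · subst hx
    rw [Function.update_self, Function.update_of_ne hy] at h
    exact absurd h.symm (hb y)
  · subst hy
    rw [Function.update_self, Function.update_of_ne hx] at h
    exact absurd h (hb x)
  · rw [Function.update_of_ne hx, Function.update_of_ne hy] at h
    exact hf h

def P (n k : ℕ) (m : Fin k → Fin (2*n) × Fin (2*n)) : Prop :=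
  ∃ c : (Fin k → Fin (2*n) × Fin (2*n)) → ℤ,
    ∀ I : Finset (Fin (2*n)),
      fm n k m I = ∑ m' ∈ Finset.univ.filter
          (fun m' : Fin k → Fin (2*n) × Fin (2*n) => isMatching n k m' ∧ isBalanced n k m'),
        c m' * fm n k m' I

lemma P_self {m : Fin k → Fin (2*n) × Fin (2*n)} (hm : isMatching n k m)
    (hb : isBalanced n k m) : P n k m := by
  refine ⟨fun m' => if m' = m then 1 else 0, fun I => ?_⟩
  rw [Finset.sum_eq_single m]
  · simp
  · intro b _ hbm; simp [hbm]
  · intro hmem; exact absurd (Finset.mem_filter.2 ⟨Finset.mem_univ _, hm, hb⟩) hmem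

lemma P_add {m m1 m2 : Fin k → Fin (2*n) × Fin (2*n)}
    (h : ∀ I, fm n k m I = fm n k m1 I + fm n k m2 I)
    (h1 : P n k m1) (h2 : P n k m2) : P n k m := by
  obtain ⟨c1, hc1⟩ := h1
  obtain ⟨c2, hc2⟩ := h2
  refine ⟨c1 + c2, fun I => ?_⟩
  rw [h I, hc1 I, hc2 I, ← Finset.sum_add_distrib]
  exact Finset.sum_congr rfl fun m' _ => by simp [add_mul]

lemma g_split1 (i e j : Fin (2*n)) (I : Finset (Fin (2*n))) :
    g (i, j) I = g (i, e) I + g (e, j) I := by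
  simp only [g]; ring

lemma g_split2 (i j i' j' : Fin (2*n)) (I : Finset (Fin (2*n))) :
    g (i, j) I * g (i', j') I
      = g (i, j') I * g (i', j) I + g (i, i') I * g (j, j') I := by
  simp only [g]; ring

lemma prod_update (m : Fin k → Fin (2*n) × Fin (2*n)) (s₀ : Fin k)
    (p : Fin (2*n) × Fin (2*n)) (I : Finset (Fin (2*n))) :
    ∏ s : Fin k, g (Function.update m s₀ p s) I
      = g p I * ∏ s ∈ Finset.univ.erase s₀, g (m s) I := by
  rw [← Finset.mul_prod_erase _ _ (Finset.mem_univ s₀), Function.update_self]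
  congr 1
  refine Finset.prod_congr rfl fun s hs => ?_
  rw [Function.update_of_ne (Finset.ne_of_mem_erase hs)]

lemma prod_update2 (m : Fin k → Fin (2*n) × Fin (2*n)) {s₀ s₁ : Fin k} (hne : s₁ ≠ s₀)
    (p q : Fin (2*n) × Fin (2*n)) (I : Finset (Fin (2*n))) :
    ∏ s : Fin k, g (Function.update (Function.update m s₀ p) s₁ q s) I
      = g p I * (g q I * ∏ s ∈ (Finset.univ.erase s₀).erase s₁, g (m s) I) := by
  rw [← Finset.mul_prod_erase _ _ (Finset.mem_univ s₀),
    ← Finset.mul_prod_erase _ _ (Finset.mem_erase.2 ⟨hne, Finset.mem_univ s₁⟩)]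
  rw [Function.update_of_ne (Ne.symm hne), Function.update_self, Function.update_self]
  congr 1
  congr 1
  refine Finset.prod_congr rfl fun s hs => ?_
  have hs1 : s ≠ s₁ := Finset.ne_of_mem_erase hs
  have hs0 : s ≠ s₀ := Finset.ne_of_mem_erase (Finset.mem_of_mem_erase hs)
  rw [Function.update_of_ne hs1, Function.update_of_ne hs0]

lemma prod_plain2 (m : Fin k → Fin (2*n) × Fin (2*n)) {s₀ s₁ : Fin k} (hne : s₁ ≠ s₀)
    (I : Finset (Fin (2*n))) :
    ∏ s : Fin k, g (m s) I
      = g (m s₀) I * (g (m s₁) I * ∏ s ∈ (Finset.univ.erase s₀).erase s₁, g (m s) I) := by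
  rw [← Finset.mul_prod_erase _ _ (Finset.mem_univ s₀),
    ← Finset.mul_prod_erase _ _ (Finset.mem_erase.2 ⟨hne, Finset.mem_univ s₁⟩)]

lemma card_parity_ne (p : ℕ) (hp : p < 2) :
    n ≤ (Finset.univ.filter fun x : Fin (2*n) => (x : ℕ) % 2 ≠ p).card := by
  have := Finset.card_le_card_of_injOn
    (f := fun i : Fin n => (⟨2 * (i : ℕ) + (1 - p), by have := i.isLt; omega⟩ : Fin (2*n)))
    (s := Finset.univ) (t := Finset.univ.filter fun x : Fin (2*n) => (x : ℕ) % 2 ≠ p)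
    (by intro i _
        simp only [Finset.mem_coe, Finset.mem_filter, Finset.mem_univ, true_and]
        omega)
    (by intro a _ b _ h
        have : 2 * (a : ℕ) + (1 - p) = 2 * (b : ℕ) + (1 - p) := congrArg Fin.val h
        exact Fin.ext (by omega))
  simpa using this


def ub (m : Fin k → Fin (2*n) × Fin (2*n)) : Finset (Fin k) :=
  Finset.univ.filter fun s => ((m s).1 : ℕ) % 2 = ((m s).2 : ℕ) % 2

lemma mem_ub {m : Fin k → Fin (2*n) × Fin (2*n)} {s : Fin k} :
    s ∈ ub m ↔ ((m s).1 : ℕ) % 2 = ((m s).2 : ℕ) % 2 := by simp [ub]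

lemma balanced_of_ub_zero {m : Fin k → Fin (2*n) × Fin (2*n)}
    (h : (ub m).card = 0) : isBalanced n k m := by
  intro s hs
  have hmem : s ∈ ub (n := n) m := mem_ub.2 hs
  rw [Finset.card_eq_zero] at h
  rw [h] at hmem
  exact absurd hmem (Finset.notMem_empty s)

lemma main (hn : 1 ≤ n) :
    ∀ (N : ℕ) (m : Fin k → Fin (2*n) × Fin (2*n)), isMatching n k m →
      (ub m).card ≤ N → P n k m := by
  intro N
  induction N with
  | zero =>
    intro m hm h
    exact P_self hm (balanced_of_ub_zero (Nat.le_zero.mp h))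
  | succ N ih =>
    intro m hm hcard
    by_cases hz : (ub m).card = 0
    · exact P_self hm (balanced_of_ub_zero hz)
    obtain ⟨s₀, hs₀⟩ := Finset.card_ne_zero.mp hz
    have hij : ((m s₀).1 : ℕ) % 2 = ((m s₀).2 : ℕ) % 2 := mem_ub.1 hs₀
    set p : ℕ := ((m s₀).1 : ℕ) % 2 with hp
    have hp2 : p < 2 := by omega
    have hpos : 1 ≤ (ub m).card := Nat.one_le_iff_ne_zero.2 hz
    by_cases hA : ∃ e : Fin (2*n), ((e : ℕ) % 2 ≠ p ∧ ∀ pos, Em m pos ≠ e)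
    · -- Case A : a fresh element of opposite parity exists
      obtain ⟨e, he1, he2⟩ := hA
      set m1 := Function.update m s₀ ((m s₀).1, e) with hm1def
      set m2 := Function.update m s₀ (e, (m s₀).2) with hm2def
      have hM1 : isMatching n k m1 := by
        rw [isMatching_iff]
        have heq : Em m1 = Function.update (Em m) (Sum.inr s₀) e := by
          funext pos
          rcases pos with s | s
          · rw [Function.update_of_ne (by simp)]
            show (m1 s).1 = (m s).1
            rcases eq_or_ne s s₀ with rfl | hs
            · rw [hm1def, Function.update_self]
            · rw [hm1def, Function.update_of_ne hs]
          · rcases eq_or_ne s s₀ with rfl | hs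
            · rw [Function.update_self]
              show (m1 s).2 = e
              rw [hm1def, Function.update_self]
            · rw [Function.update_of_ne (by simpa using hs)]
              show (m1 s).2 = (m s).2
              rw [hm1def, Function.update_of_ne hs]
        rw [heq]
        exact inj_update hm _ _ he2
      have hM2 : isMatching n k m2 := by
        rw [isMatching_iff]
        have heq : Em m2 = Function.update (Em m) (Sum.inl s₀) e := by
          funext pos
          rcases pos with s | s
          · rcases eq_or_ne s s₀ with rfl | hs
            · rw [Function.update_self]
              show (m2 s).1 = e
              rw [hm2def, Function.update_self]
            · rw [Function.update_of_ne (by simpa using hs)]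
              show (m2 s).1 = (m s).1
              rw [hm2def, Function.update_of_ne hs]
          · rw [Function.update_of_ne (by simp)]
            show (m2 s).2 = (m s).2
            rcases eq_or_ne s s₀ with rfl | hs
            · rw [hm2def, Function.update_self]
            · rw [hm2def, Function.update_of_ne hs]
        rw [heq]
        exact inj_update hm _ _ he2
      have hsub1 : ub m1 ⊆ (ub m).erase s₀ := by
        intro s hs
        have hs' := mem_ub.1 hs
        rcases eq_or_ne s s₀ with rfl | hne
        · rw [hm1def, Function.update_self] at hs'
          exact absurd hs' (by simpa using fun h => he1 (by omega))
        · rw [hm1def, Function.update_of_ne hne] at hs'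
          exact Finset.mem_erase.2 ⟨hne, mem_ub.2 hs'⟩
      have hsub2 : ub m2 ⊆ (ub m).erase s₀ := by
        intro s hs
        have hs' := mem_ub.1 hs
        rcases eq_or_ne s s₀ with rfl | hne
        · rw [hm2def, Function.update_self] at hs'
          exact absurd hs' (by simpa using fun h => he1 (by omega))
        · rw [hm2def, Function.update_of_ne hne] at hs'
          exact Finset.mem_erase.2 ⟨hne, mem_ub.2 hs'⟩
      have hc1 : (ub m1).card ≤ N := by
        have := Finset.card_le_card hsub1
        rw [Finset.card_erase_of_mem hs₀] at this
        omega
      have hc2 : (ub m2).card ≤ N := by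
        have := Finset.card_le_card hsub2
        rw [Finset.card_erase_of_mem hs₀] at this
        omega
      have hfm : ∀ I, fm n k m I = fm n k m1 I + fm n k m2 I := by
        intro I
        rw [fm_eq_prod, fm_eq_prod, fm_eq_prod, hm1def, hm2def, prod_update, prod_update,
          ← Finset.mul_prod_erase _ _ (Finset.mem_univ s₀), ← add_mul]
        congr 1
        exact g_split1 (m s₀).1 e (m s₀).2 I
      exact P_add hfm (ih m1 hM1 hc1) (ih m2 hM2 hc2)
    · -- Case B : no fresh element of opposite parity
      push_neg at hA
      by_cases hB : ∃ s₁, s₁ ≠ s₀ ∧ ((m s₁).1 : ℕ) % 2 = ((m s₁).2 : ℕ) % 2 ∧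
          ((m s₁).1 : ℕ) % 2 ≠ p
      · obtain ⟨s₁, hne, hq, hqp⟩ := hB
        have hq' : ((m s₁).2 : ℕ) % 2 ≠ p := by omega
        set m1 := Function.update (Function.update m s₀ ((m s₀).1, (m s₁).2)) s₁
          ((m s₁).1, (m s₀).2) with hm1def
        set m2 := Function.update (Function.update m s₀ ((m s₀).1, (m s₁).1)) s₁
          ((m s₀).2, (m s₁).2) with hm2def
        have hm1s0 : m1 s₀ = ((m s₀).1, (m s₁).2) := by
          rw [hm1def, Function.update_of_ne (Ne.symm hne), Function.update_self]
        have hm1s1 : m1 s₁ = ((m s₁).1, (m s₀).2) := by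
          rw [hm1def, Function.update_self]
        have hm1o : ∀ s, s ≠ s₀ → s ≠ s₁ → m1 s = m s := by
          intro s h0 h1
          rw [hm1def, Function.update_of_ne h1, Function.update_of_ne h0]
        have hm2s0 : m2 s₀ = ((m s₀).1, (m s₁).1) := by
          rw [hm2def, Function.update_of_ne (Ne.symm hne), Function.update_self]
        have hm2s1 : m2 s₁ = ((m s₀).2, (m s₁).2) := by
          rw [hm2def, Function.update_self]
        have hm2o : ∀ s, s ≠ s₀ → s ≠ s₁ → m2 s = m s := by
          intro s h0 h1
          rw [hm2def, Function.update_of_ne h1, Function.update_of_ne h0]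
        have hM1 : isMatching n k m1 := by
          rw [isMatching_iff]
          have heq : Em m1 = Em m ∘ (Equiv.swap (Sum.inr s₀) (Sum.inr s₁)) := by
            funext pos
            rcases pos with s | s
            · rw [Function.comp_apply, Equiv.swap_apply_of_ne_of_ne (by simp) (by simp)]
              show (m1 s).1 = (m s).1
              rcases eq_or_ne s s₀ with rfl | h0
              · rw [hm1s0]
              · rcases eq_or_ne s s₁ with rfl | h1
                · rw [hm1s1]
                · rw [hm1o s h0 h1]
            · rw [Function.comp_apply]
              rcases eq_or_ne s s₀ with rfl | h0
              · rw [Equiv.swap_apply_left]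
                show (m1 s).2 = (m s₁).2
                rw [hm1s0]
              · rcases eq_or_ne s s₁ with rfl | h1
                · rw [Equiv.swap_apply_right]
                  show (m1 s).2 = (m s₀).2
                  rw [hm1s1]
                · rw [Equiv.swap_apply_of_ne_of_ne (by simpa using h0) (by simpa using h1)]
                  show (m1 s).2 = (m s).2
                  rw [hm1o s h0 h1]
          rw [heq]
          exact Function.Injective.comp hm (Equiv.injective _)
        have hM2 : isMatching n k m2 := by
          rw [isMatching_iff]
          have heq : Em m2 = Em m ∘ (Equiv.swap (Sum.inr s₀) (Sum.inl s₁)) := by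
            funext pos
            rcases pos with s | s
            · rcases eq_or_ne s s₁ with rfl | h1
              · rw [Function.comp_apply, Equiv.swap_apply_right]
                show (m2 s).1 = (m s₀).2
                rw [hm2s1]
              · rw [Function.comp_apply,
                  Equiv.swap_apply_of_ne_of_ne (by simp) (by simpa using h1)]
                show (m2 s).1 = (m s).1
                rcases eq_or_ne s s₀ with rfl | h0
                · rw [hm2s0]
                · rw [hm2o s h0 h1]
            · rcases eq_or_ne s s₀ with rfl | h0
              · rw [Function.comp_apply, Equiv.swap_apply_left]
                show (m2 s).2 = (m s₁).1
                rw [hm2s0]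
              · rw [Function.comp_apply,
                  Equiv.swap_apply_of_ne_of_ne (by simpa using h0) (by simp)]
                show (m2 s).2 = (m s).2
                rcases eq_or_ne s s₁ with rfl | h1
                · rw [hm2s1]
                · rw [hm2o s h0 h1]
          rw [heq]
          exact Function.Injective.comp hm (Equiv.injective _)
        have hsub1 : ub m1 ⊆ (ub m).erase s₀ := by
          intro s hs
          have hs' := mem_ub.1 hs
          rcases eq_or_ne s s₀ with hs0 | h0
          · exfalso
            have hx : ((m s₀).1 : ℕ) % 2 = ((m s₁).2 : ℕ) % 2 := by
              rw [hs0] at hs'; rw [hm1s0] at hs'; exact hs'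
            omega
          rcases eq_or_ne s s₁ with hs1 | h1
          · exfalso
            have hx : ((m s₁).1 : ℕ) % 2 = ((m s₀).2 : ℕ) % 2 := by
              rw [hs1] at hs'; rw [hm1s1] at hs'; exact hs'
            omega
          rw [hm1o s h0 h1] at hs'
          exact Finset.mem_erase.2 ⟨h0, mem_ub.2 hs'⟩
        have hsub2 : ub m2 ⊆ (ub m).erase s₀ := by
          intro s hs
          have hs' := mem_ub.1 hs
          rcases eq_or_ne s s₀ with hs0 | h0
          · exfalso
            have hx : ((m s₀).1 : ℕ) % 2 = ((m s₁).1 : ℕ) % 2 := by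
              rw [hs0] at hs'; rw [hm2s0] at hs'; exact hs'
            omega
          rcases eq_or_ne s s₁ with hs1 | h1
          · exfalso
            have hx : ((m s₀).2 : ℕ) % 2 = ((m s₁).2 : ℕ) % 2 := by
              rw [hs1] at hs'; rw [hm2s1] at hs'; exact hs'
            omega
          rw [hm2o s h0 h1] at hs'
          exact Finset.mem_erase.2 ⟨h0, mem_ub.2 hs'⟩
        have hc1 : (ub m1).card ≤ N := by
          have := Finset.card_le_card hsub1
          rw [Finset.card_erase_of_mem hs₀] at this
          omega
        have hc2 : (ub m2).card ≤ N := by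
          have := Finset.card_le_card hsub2
          rw [Finset.card_erase_of_mem hs₀] at this
          omega
        have hfm : ∀ I, fm n k m I = fm n k m1 I + fm n k m2 I := by
          intro I
          rw [fm_eq_prod, fm_eq_prod, fm_eq_prod, hm1def, hm2def,
            prod_update2 m hne _ _ I, prod_update2 m hne _ _ I, prod_plain2 m hne I,
            ← mul_assoc, ← mul_assoc, ← mul_assoc, ← add_mul]
          congr 1
          exact g_split2 (m s₀).1 (m s₀).2 (m s₁).1 (m s₁).2 I
        exact P_add hfm (ih m1 hM1 hc1) (ih m2 hM2 hc2)
      · -- impossible : counting argument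
        exfalso
        push_neg at hB
        have claim : ∀ x : Fin (2*n), (x : ℕ) % 2 ≠ p →
            ∃ s : Fin k, s ≠ s₀ ∧ (x = (m s).1 ∨ x = (m s).2) := by
          intro x hx
          obtain ⟨pos, hpos⟩ := hA x hx
          rcases pos with s | s
          · refine ⟨s, ?_, Or.inl hpos.symm⟩
            intro hss
            apply hx
            rw [← hpos, hss]
            exact hp.symm
          · refine ⟨s, ?_, Or.inr hpos.symm⟩
            intro hss
            apply hx
            rw [← hpos, hss]
            show ((m s₀).2 : ℕ) % 2 = p
            omega
        choose F hF1 hF2 using claim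
        have huniq : ∀ (x y : Fin (2*n)) (s : Fin k), (x : ℕ) % 2 ≠ p → (y : ℕ) % 2 ≠ p →
            s ≠ s₀ → (x = (m s).1 ∨ x = (m s).2) → (y = (m s).1 ∨ y = (m s).2) → x = y := by
          intro x y s hx hy hs hxs hys
          by_cases hbal : ((m s).1 : ℕ) % 2 = ((m s).2 : ℕ) % 2
          · have hpp := hB s hs hbal
            rcases hxs with rfl | rfl <;> omega
          · rcases hxs with rfl | rfl <;> rcases hys with rfl | rfl
            · rfl
            · exfalso; omega
            · exfalso; omega
            · rfl
        have h1 : n ≤ (Finset.univ.filter fun x : Fin (2*n) => (x : ℕ) % 2 ≠ p).card :=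
          card_parity_ne p hp2
        have h2 : (Finset.univ.filter fun x : Fin (2*n) => (x : ℕ) % 2 ≠ p).card
            ≤ ((Finset.univ : Finset (Fin k)).erase s₀).card := by
          refine Finset.card_le_card_of_injOn
            (fun x : Fin (2*n) => if hx : (x : ℕ) % 2 ≠ p then F x hx else s₀) ?_ ?_
          · intro x hx
            simp only [Finset.mem_coe, Finset.mem_filter, Finset.mem_univ, true_and] at hx
            have hfx : (fun x : Fin (2*n) => if hx : (x : ℕ) % 2 ≠ p then F x hx else s₀) x = F x hx :=
              dif_pos hx
            rw [hfx]
            exact Finset.mem_erase.2 ⟨hF1 x hx, Finset.mem_univ _⟩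
          · intro x hxm y hym hfeq
            simp only [Finset.coe_filter, Finset.mem_univ, true_and,
              Set.mem_setOf_eq] at hxm hym
            have hfx : (fun x : Fin (2*n) => if hx : (x : ℕ) % 2 ≠ p then F x hx else s₀) x = F x hxm :=
              dif_pos hxm
            have hfy : (fun x : Fin (2*n) => if hx : (x : ℕ) % 2 ≠ p then F x hx else s₀) y = F y hym :=
              dif_pos hym
            rw [hfx, hfy] at hfeq
            exact huniq x y (F x hxm) hxm hym (hF1 x hxm) (hF2 x hxm)
              (hfeq ▸ hF2 y hym)
        have h3 : ((Finset.univ : Finset (Fin k)).erase s₀).card = k - 1 := by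
          rw [Finset.card_erase_of_mem (Finset.mem_univ s₀)]
          simp
        have h4 : k + k ≤ 2 * n := by
          have := Fintype.card_le_of_injective (Em m) ((isMatching_iff m).mp hm)
          simpa using this
        have h5 : 0 < k := s₀.pos
        omega

end Stmt5Aux

/-- Every f_m, for m a partial matching of cardinality k, is, as a
ℤ-valued function on k-element subsets, an integer linear combination of the f_{m'}
over balanced partial matchings m' of cardinality k. -/
theorem stmt5 (n k : ℕ) (hn : 1 ≤ n) (m : Fin k → Fin (2 * n) × Fin (2 * n))
    (hm : isMatching n k m) :
    ∃ c : (Fin k → Fin (2 * n) × Fin (2 * n)) → ℤ,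
      ∀ I : Finset (Fin (2 * n)), I.card = k →
        fm n k m I =
          ∑ m' ∈ Finset.univ.filter
              (fun m' : Fin k → Fin (2 * n) × Fin (2 * n) =>
                isMatching n k m' ∧ isBalanced n k m'),
            c m' * fm n k m' I := by
  obtain ⟨c, hc⟩ := Stmt5Aux.main hn (Stmt5Aux.ub m).card m hm le_rfl
  exact ⟨c, fun I _ => hc I⟩
end

section
/- Let n ≥ 1 and 0 ≤ k ≤ n. Let f be any ℤ-valued function on the k-element subsets of {1,…,2n} such that Σ_{|I|=k, J⊆I} f(I) = 0 for every subset J ⊆ {1,…,2n} with |J| < k. Then f is an integer linear combination of the functions f_m, where m ranges over the balanced partial matchings of {1,…,2n} of cardinality k. -/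
open Finset

/-- Product form of `fm`. -/
def fmx (n k : ℕ) (m : Fin k → Fin (2 * n) × Fin (2 * n)) (I : Finset (Fin (2 * n))) : ℤ :=
  ∏ s : Fin k,
    ((if (m s).1 ∈ I then (1 : ℤ) else 0) - (if (m s).2 ∈ I then (1 : ℤ) else 0))

lemma fm_eq_fmx (n k : ℕ) (m : Fin k → Fin (2 * n) × Fin (2 * n))
    (I : Finset (Fin (2 * n))) : fm n k m I = fmx n k m I := by
  unfold fm fmx
  split
  · next h =>
    refine Finset.prod_congr rfl fun s _ => ?_
    rcases h s with ⟨h1, h2⟩ | ⟨h1, h2⟩ <;> simp [h1, h2]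
  · next h =>
    push_neg at h
    obtain ⟨s, hs⟩ := h
    symm
    apply Finset.prod_eq_zero (Finset.mem_univ s)
    by_cases h1 : (m s).1 ∈ I <;> by_cases h2 : (m s).2 ∈ I <;>
      simp [h1, h2] at hs ⊢ <;> tauto

lemma isMatching_iff {n k : ℕ} {m : Fin k → Fin (2 * n) × Fin (2 * n)} :
    isMatching n k m ↔
      (∀ s : Fin k, (m s).1 ≠ (m s).2) ∧
      (∀ s t : Fin k, s ≠ t →
        (m s).1 ≠ (m t).1 ∧ (m s).1 ≠ (m t).2 ∧ (m s).2 ≠ (m t).1 ∧ (m s).2 ≠ (m t).2) := by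
  constructor
  · intro h
    constructor
    · intro s hst
      have := @h (Sum.inl s) (Sum.inr s) (by simpa using hst)
      simp at this
    · intro s t hst
      refine ⟨fun he => ?_, fun he => ?_, fun he => ?_, fun he => ?_⟩
      · have := @h (Sum.inl s) (Sum.inl t) (by simpa using he); simp_all
      · have := @h (Sum.inl s) (Sum.inr t) (by simpa using he); simp_all
      · have := @h (Sum.inr s) (Sum.inl t) (by simpa using he); simp_all
      · have := @h (Sum.inr s) (Sum.inr t) (by simpa using he); simp_all
  · rintro ⟨h1, h2⟩ x y hxy
    match x, y with
    | Sum.inl s, Sum.inl t =>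
      simp only [Sum.elim_inl] at hxy
      by_cases hst : s = t
      · exact congrArg Sum.inl hst
      · exact absurd hxy (h2 s t hst).1
    | Sum.inl s, Sum.inr t =>
      simp only [Sum.elim_inl, Sum.elim_inr] at hxy
      by_cases hst : s = t
      · subst hst; exact absurd hxy (h1 s)
      · exact absurd hxy (h2 s t hst).2.1
    | Sum.inr s, Sum.inl t =>
      simp only [Sum.elim_inl, Sum.elim_inr] at hxy
      by_cases hst : s = t
      · subst hst; exact absurd hxy.symm (h1 s)
      · exact absurd hxy (h2 s t hst).2.2.1
    | Sum.inr s, Sum.inr t =>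
      simp only [Sum.elim_inr] at hxy
      by_cases hst : s = t
      · exact congrArg Sum.inr hst
      · exact absurd hxy (h2 s t hst).2.2.2

lemma factor_ne_zero {n : ℕ} {a b : Fin (2 * n)} {I : Finset (Fin (2 * n))}
    (h : ((if a ∈ I then (1 : ℤ) else 0) - (if b ∈ I then (1 : ℤ) else 0)) ≠ 0) :
    (a ∈ I ∧ b ∉ I) ∨ (a ∉ I ∧ b ∈ I) := by
  by_cases h1 : a ∈ I <;> by_cases h2 : b ∈ I <;> simp [h1, h2] at h ⊢

/-- If `fmx m I ≠ 0`, then each pair has exactly one entry in `I`. -/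
lemma fmx_ne_zero_iff {n k : ℕ} {m : Fin k → Fin (2 * n) × Fin (2 * n)}
    {I : Finset (Fin (2 * n))} (h : fmx n k m I ≠ 0) (s : Fin k) :
    ((m s).1 ∈ I ∧ (m s).2 ∉ I) ∨ ((m s).1 ∉ I ∧ (m s).2 ∈ I) := by
  unfold fmx at h
  rw [Finset.prod_ne_zero_iff] at h
  exact factor_ne_zero (h s (Finset.mem_univ s))

/-- If `b ∈ I` is not an entry of the matching `m` and `I` has card `k`,
then `fmx m I = 0`. -/
lemma fmx_eq_zero_of_extra {n k : ℕ} {m : Fin k → Fin (2 * n) × Fin (2 * n)}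
    (hm : isMatching n k m) {I : Finset (Fin (2 * n))} (hI : I.card = k)
    {b : Fin (2 * n)} (hb : ∀ s, (m s).1 ≠ b ∧ (m s).2 ≠ b) (hbI : b ∈ I) :
    fmx n k m I = 0 := by
  by_contra h
  rw [isMatching_iff] at hm
  set φ : Fin k → Fin (2 * n) := fun s => if (m s).1 ∈ I then (m s).1 else (m s).2 with hφ
  have hφI : ∀ s, φ s ∈ I := by
    intro s
    rcases fmx_ne_zero_iff h s with ⟨h1, h2⟩ | ⟨h1, h2⟩ <;> simp [hφ, h1, h2]
  have hφinj : Function.Injective φ := by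
    intro s t hst
    by_contra hne
    have h4 := hm.2 s t hne
    have hps := fmx_ne_zero_iff h s
    have hpt := fmx_ne_zero_iff h t
    simp only [hφ] at hst
    rcases hps with ⟨h1, h2⟩ | ⟨h1, h2⟩ <;> rcases hpt with ⟨h3, h5⟩ | ⟨h3, h5⟩ <;>
      simp [h1, h2, h3, h5] at hst <;> tauto
  have hφb : ∀ s, φ s ≠ b := by
    intro s
    simp only [hφ]
    split
    · exact (hb s).1
    · exact (hb s).2
  have hsub : insert b (Finset.image φ Finset.univ) ⊆ I := by
    intro x hx
    rcases Finset.mem_insert.mp hx with rfl | hx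
    · exact hbI
    · obtain ⟨s, _, rfl⟩ := Finset.mem_image.mp hx
      exact hφI s
  have hcard : (insert b (Finset.image φ Finset.univ)).card = k + 1 := by
    rw [Finset.card_insert_of_notMem]
    · rw [Finset.card_image_of_injective _ hφinj, Finset.card_univ, Fintype.card_fin]
    · intro hmem
      obtain ⟨s, _, hs⟩ := Finset.mem_image.mp hmem
      exact hφb s hs
  have := Finset.card_le_card hsub
  omega

/-- Each `fmx m` (m a matching with entries in U) satisfies the null-design relations. -/
lemma fmx_null {n k : ℕ} {m : Fin k → Fin (2 * n) × Fin (2 * n)}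
    (hm : isMatching n k m) {U : Finset (Fin (2 * n))}
    (hmU : ∀ s, (m s).1 ∈ U ∧ (m s).2 ∈ U) {J : Finset (Fin (2 * n))}
    (hJU : J ⊆ U) (hJc : J.card < k) :
    ∑ I ∈ (Finset.powersetCard k U).filter (fun I => J ⊆ I), fmx n k m I = 0 := by
  rw [isMatching_iff] at hm
  -- find a pair avoiding J
  have hex : ∃ s₀ : Fin k, (m s₀).1 ∉ J ∧ (m s₀).2 ∉ J := by
    by_contra hc
    push_neg at hc
    set ψ : Fin k → Fin (2 * n) := fun s => if (m s).1 ∈ J then (m s).1 else (m s).2 with hψ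
    have hψJ : ∀ s, ψ s ∈ J := by
      intro s
      simp only [hψ]
      split
      · assumption
      · next hn1 => exact hc s hn1
    have hψinj : Function.Injective ψ := by
      intro s t hst
      by_contra hne
      have h4 := hm.2 s t hne
      simp only [hψ] at hst
      split at hst <;> split at hst <;> tauto
    have : k ≤ J.card := by
      have : Finset.image ψ Finset.univ ⊆ J := fun x hx => by
        obtain ⟨s, _, rfl⟩ := Finset.mem_image.mp hx; exact hψJ s
      have h5 := Finset.card_le_card this
      rwa [Finset.card_image_of_injective _ hψinj, Finset.card_univ, Fintype.card_fin] at h5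
    omega
  obtain ⟨s₀, hi, hj⟩ := hex
  set i := (m s₀).1
  set j := (m s₀).2
  have hij : i ≠ j := hm.1 s₀
  set σ : Finset (Fin (2 * n)) → Finset (Fin (2 * n)) :=
    fun I => I.map (Equiv.swap i j).toEmbedding with hσ
  have hmemσ : ∀ (I : Finset (Fin (2 * n))) (x : Fin (2 * n)),
      x ∈ σ I ↔ Equiv.swap i j x ∈ I := by
    intro I x
    rw [hσ]
    simp only [Finset.mem_map_equiv, Equiv.symm_swap]
  have hkey : ∀ I, fmx n k m (σ I) = - fmx n k m I := by
    intro I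
    unfold fmx
    rw [← Finset.mul_prod_erase _ _ (Finset.mem_univ s₀),
        ← Finset.mul_prod_erase _ _ (Finset.mem_univ s₀)]
    have hrest : (∏ s ∈ Finset.univ.erase s₀,
        ((if (m s).1 ∈ σ I then (1 : ℤ) else 0) - (if (m s).2 ∈ σ I then (1 : ℤ) else 0)))
        = ∏ s ∈ Finset.univ.erase s₀,
        ((if (m s).1 ∈ I then (1 : ℤ) else 0) - (if (m s).2 ∈ I then (1 : ℤ) else 0)) := by
      refine Finset.prod_congr rfl fun t ht => ?_
      have htne : t ≠ s₀ := Finset.ne_of_mem_erase ht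
      have h4 := hm.2 t s₀ htne
      simp only [hmemσ, Equiv.swap_apply_of_ne_of_ne (show (m t).1 ≠ i from h4.1) (show (m t).1 ≠ j from h4.2.1),
          Equiv.swap_apply_of_ne_of_ne (show (m t).2 ≠ i from h4.2.2.1) (show (m t).2 ≠ j from h4.2.2.2)]
    rw [hrest]
    have h1 : ((i : Fin (2*n)) ∈ σ I ↔ j ∈ I) := by rw [hmemσ, Equiv.swap_apply_left]
    have h2 : ((j : Fin (2*n)) ∈ σ I ↔ i ∈ I) := by rw [hmemσ, Equiv.swap_apply_right]
    have : ((if i ∈ σ I then (1 : ℤ) else 0) - (if j ∈ σ I then (1 : ℤ) else 0))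
        = -((if i ∈ I then (1 : ℤ) else 0) - (if j ∈ I then (1 : ℤ) else 0)) := by
      rw [if_congr h1 rfl rfl, if_congr h2 rfl rfl]; ring
    rw [this]; ring
  refine Finset.sum_involution (fun I _ => σ I) ?_ ?_ ?_ ?_
  · intro I _
    rw [hkey]; ring
  · intro I hI hne hσI
    apply hne
    have h0 : fmx n k m (σ I) = - fmx n k m I := hkey I
    rw [show σ I = I from hσI] at h0
    omega
  · intro I hI
    simp only [Finset.mem_filter, Finset.mem_powersetCard] at hI ⊢
    obtain ⟨⟨hIU, hIc⟩, hJI⟩ := hI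
    refine ⟨⟨?_, ?_⟩, ?_⟩
    · intro x hx
      rw [hmemσ] at hx
      have hy : Equiv.swap i j x ∈ U := hIU hx
      by_cases hxi : x = i
      · subst hxi; exact (hmU s₀).1
      · by_cases hxj : x = j
        · subst hxj; exact (hmU s₀).2
        · rwa [Equiv.swap_apply_of_ne_of_ne hxi hxj] at hy
    · rw [hσ, Finset.card_map]; exact hIc
    · intro x hx
      rw [hmemσ, Equiv.swap_apply_of_ne_of_ne (by rintro rfl; exact hi hx)
        (by rintro rfl; exact hj hx)]
      exact hJI hx
  · intro I _
    ext x
    rw [hmemσ, hmemσ, Equiv.swap_apply_self]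

/-- Auxiliary: sum of `f` over `k`-subsets of `U` containing `J`. -/
def Fsum (n k : ℕ) (U : Finset (Fin (2 * n))) (f : Finset (Fin (2 * n)) → ℤ)
    (J : Finset (Fin (2 * n))) : ℤ :=
  ∑ I' ∈ (Finset.powersetCard k U).filter (fun I' => J ⊆ I'), f I'

/-- Gottlieb-type vanishing: a null design on a ground set of size < 2k is zero. -/
lemma null_design_vanish {n k : ℕ} (hk : 0 < k) {U : Finset (Fin (2 * n))}
    (hU : U.card < 2 * k) (f : Finset (Fin (2 * n)) → ℤ)
    (hf : ∀ J ⊆ U, J.card < k →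
      ∑ I ∈ (Finset.powersetCard k U).filter (fun I => J ⊆ I), f I = 0)
    {I : Finset (Fin (2 * n))} (hIU : I ⊆ U) (hIc : I.card = k) : f I = 0 := by
  have key : ∑ J ∈ I.powerset, (-1 : ℤ) ^ J.card * Fsum n k U f J = 0 := by
    have step1 : ∀ J, Fsum n k U f J = ∑ I' ∈ Finset.powersetCard k U,
        if J ⊆ I' then f I' else 0 := by
      intro J; unfold Fsum; exact Finset.sum_filter _ _
    calc ∑ J ∈ I.powerset, (-1 : ℤ) ^ J.card * Fsum n k U f J
        = ∑ J ∈ I.powerset, ∑ I' ∈ Finset.powersetCard k U,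
            (-1 : ℤ) ^ J.card * (if J ⊆ I' then f I' else 0) := by
          refine Finset.sum_congr rfl fun J _ => ?_
          rw [step1, Finset.mul_sum]
      _ = ∑ I' ∈ Finset.powersetCard k U, ∑ J ∈ I.powerset,
            (-1 : ℤ) ^ J.card * (if J ⊆ I' then f I' else 0) := Finset.sum_comm
      _ = ∑ I' ∈ Finset.powersetCard k U,
            f I' * ∑ J ∈ (I ∩ I').powerset, (-1 : ℤ) ^ J.card := by
          refine Finset.sum_congr rfl fun I' _ => ?_
          rw [Finset.mul_sum]
          have hset : I.powerset.filter (fun J => J ⊆ I') = (I ∩ I').powerset := by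
            ext J
            simp only [Finset.mem_filter, Finset.mem_powerset, Finset.subset_inter_iff]
          calc ∑ J ∈ I.powerset, (-1 : ℤ) ^ J.card * (if J ⊆ I' then f I' else 0)
              = ∑ J ∈ I.powerset, (if J ⊆ I' then f I' * (-1 : ℤ) ^ J.card else 0) := by
                refine Finset.sum_congr rfl fun J _ => ?_
                split <;> ring
            _ = ∑ J ∈ I.powerset.filter (fun J => J ⊆ I'), f I' * (-1 : ℤ) ^ J.card :=
                (Finset.sum_filter _ _).symm
            _ = ∑ J ∈ (I ∩ I').powerset, f I' * (-1 : ℤ) ^ J.card := by rw [hset]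
      _ = 0 := by
          refine Finset.sum_eq_zero fun I' hI' => ?_
          rw [Finset.mem_powersetCard] at hI'
          have hne : I ∩ I' ≠ ∅ := by
            intro he
            have h1 : (I ∪ I').card ≤ U.card :=
              Finset.card_le_card (Finset.union_subset hIU hI'.1)
            have h2 := Finset.card_inter_add_card_union I I'
            rw [he] at h2
            simp [hIc, hI'.2] at h2
            omega
          rw [Finset.sum_powerset_neg_one_pow_card, if_neg hne, mul_zero]
  have hsingle : ∑ J ∈ I.powerset, (-1 : ℤ) ^ J.card * Fsum n k U f J = (-1 : ℤ) ^ k * f I := by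
    rw [Finset.sum_eq_single I]
    · have : Fsum n k U f I = f I := by
        unfold Fsum
        have hset : (Finset.powersetCard k U).filter (fun I' => I ⊆ I') = {I} := by
          ext I'
          simp only [Finset.mem_filter, Finset.mem_powersetCard, Finset.mem_singleton]
          constructor
          · rintro ⟨⟨hI'U, hI'c⟩, hII'⟩
            exact (Finset.eq_of_subset_of_card_le hII' (by omega)).symm
          · rintro rfl
            exact ⟨⟨hIU, hIc⟩, Finset.Subset.refl _⟩
        rw [hset, Finset.sum_singleton]
      rw [this, hIc]
    · intro J hJ hne
      have hJI : J ⊆ I := Finset.mem_powerset.mp hJ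
      have hJc : J.card < k := by
        have := Finset.card_lt_card (Finset.ssubset_iff_subset_ne.mpr ⟨hJI, hne⟩)
        omega
      unfold Fsum
      rw [hf J (hJI.trans hIU) hJc, mul_zero]
    · intro h
      exact absurd (Finset.mem_powerset.mpr (Finset.Subset.refl I)) h
  rw [hsingle] at key
  have hne : (-1 : ℤ) ^ k ≠ 0 := by
    apply pow_ne_zero; norm_num
  exact (mul_eq_zero.mp key).resolve_left hne

/-- The finset of matchings of size `k` with all entries in `U`. -/
def mset (n k : ℕ) (U : Finset (Fin (2 * n))) :
    Finset (Fin k → Fin (2 * n) × Fin (2 * n)) :=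
  Finset.univ.filter (fun m => isMatching n k m ∧ ∀ s, (m s).1 ∈ U ∧ (m s).2 ∈ U)

lemma mem_mset {n k : ℕ} {U : Finset (Fin (2 * n))} {m : Fin k → Fin (2 * n) × Fin (2 * n)} :
    m ∈ mset n k U ↔ isMatching n k m ∧ ∀ s, (m s).1 ∈ U ∧ (m s).2 ∈ U := by
  simp [mset]

/-- Main spanning lemma (no parity): every null design on `k`-subsets of `U`
is a ℤ-combination of the `fmx m` for matchings `m` with entries in `U`. -/
lemma main_span (n : ℕ) : ∀ (N k : ℕ) (U : Finset (Fin (2 * n))), k + U.card ≤ N →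
    ∀ f : Finset (Fin (2 * n)) → ℤ,
    (∀ J ⊆ U, J.card < k →
      ∑ I ∈ (Finset.powersetCard k U).filter (fun I => J ⊆ I), f I = 0) →
    ∃ c : (Fin k → Fin (2 * n) × Fin (2 * n)) → ℤ,
      ∀ I ⊆ U, I.card = k → f I = ∑ m ∈ mset n k U, c m * fmx n k m I := by
  intro N
  induction N with
  | zero =>
    intro k U hN f _
    -- k = 0 forced
    have hk0 : k = 0 := by omega
    subst hk0
    · refine ⟨fun _ => f ∅, ?_⟩
      intro I hIU hIc
      rw [Finset.card_eq_zero.mp hIc]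
      have hall : mset n 0 U = Finset.univ := by
        apply Finset.filter_true_of_mem
        intro m _
        refine ⟨fun x y _ => ?_, fun s => s.elim0⟩
        · rcases x with s | s <;> exact s.elim0
      have hval : ∀ m ∈ mset n 0 U, f ∅ * fmx n 0 m ∅ = f ∅ := by
        intro m _
        unfold fmx
        simp
      rw [Finset.sum_congr rfl hval, Finset.sum_const, hall]
      simp
  | succ N ih =>
    intro k U hN f hf
    match k with
    | 0 =>
      refine ⟨fun _ => f ∅, ?_⟩
      intro I hIU hIc
      rw [Finset.card_eq_zero.mp hIc]
      have hall : mset n 0 U = Finset.univ := by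
        apply Finset.filter_true_of_mem
        intro m _
        refine ⟨fun x y _ => ?_, fun s => s.elim0⟩
        · rcases x with s | s <;> exact s.elim0
      have hval : ∀ m ∈ mset n 0 U, f ∅ * fmx n 0 m ∅ = f ∅ := by
        intro m _
        unfold fmx
        simp
      rw [Finset.sum_congr rfl hval, Finset.sum_const, hall]
      simp
    | (k' + 1) =>
      by_cases hbig : 2 * (k' + 1) ≤ U.card
      swap
      · -- small ground set: f vanishes on k-subsets
        refine ⟨0, fun I hIU hIc => ?_⟩
        rw [null_design_vanish (by omega) (by omega) f hf hIU hIc]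
        simp
      -- pick a ∈ U
      obtain ⟨a, haU⟩ : U.Nonempty := Finset.card_pos.mp (by omega)
      have hUe : (U.erase a).card = U.card - 1 := Finset.card_erase_of_mem haU
      -- the derived null design g on (k')-subsets of U.erase a
      have hg : ∀ J ⊆ U.erase a, J.card < k' →
          ∑ S ∈ (Finset.powersetCard k' (U.erase a)).filter (fun S => J ⊆ S),
            f (insert a S) = 0 := by
        intro J hJ hJc
        have haJ : a ∉ J := fun h => (Finset.mem_erase.mp (hJ h)).1 rfl
        have hins : insert a J ⊆ U :=
          Finset.insert_subset haU (hJ.trans (Finset.erase_subset _ _))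
        have hcard : (insert a J).card < k' + 1 := by
          rw [Finset.card_insert_of_notMem haJ]; omega
        have hbij : ∑ S ∈ (Finset.powersetCard k' (U.erase a)).filter (fun S => J ⊆ S),
            f (insert a S)
            = ∑ I ∈ (Finset.powersetCard (k' + 1) U).filter (fun I => insert a J ⊆ I),
              f I := by
          refine Finset.sum_nbij' (fun S => insert a S) (fun I => I.erase a)
            ?_ ?_ ?_ ?_ ?_
          · intro S hS
            simp only [Finset.mem_filter, Finset.mem_powersetCard] at hS ⊢
            obtain ⟨⟨hSU, hSc⟩, hJS⟩ := hS
            have haS : a ∉ S := fun h => (Finset.mem_erase.mp (hSU h)).1 rfl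
            refine ⟨⟨Finset.insert_subset haU (hSU.trans (Finset.erase_subset _ _)), ?_⟩, ?_⟩
            · rw [Finset.card_insert_of_notMem haS, hSc]
            · exact Finset.insert_subset_insert _ hJS
          · intro I hI
            simp only [Finset.mem_filter, Finset.mem_powersetCard] at hI ⊢
            obtain ⟨⟨hIU, hIc⟩, hJI⟩ := hI
            have haI : a ∈ I := hJI (Finset.mem_insert_self a J)
            refine ⟨⟨Finset.erase_subset_erase a hIU, ?_⟩, ?_⟩
            · rw [Finset.card_erase_of_mem haI, hIc]
              omega
            · intro x hx
              refine Finset.mem_erase.mpr ⟨fun hxa => haJ (hxa ▸ hx), ?_⟩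
              exact hJI (Finset.mem_insert_of_mem hx)
          · intro S hS
            simp only [Finset.mem_filter, Finset.mem_powersetCard] at hS
            have haS : a ∉ S := fun h => (Finset.mem_erase.mp (hS.1.1 h)).1 rfl
            exact Finset.erase_insert haS
          · intro I hI
            simp only [Finset.mem_filter, Finset.mem_powersetCard] at hI
            exact Finset.insert_erase (hI.2 (Finset.mem_insert_self a J))
          · intro S _
            rfl
        rw [hbij]
        exact hf (insert a J) hins hcard
      obtain ⟨c, hc⟩ := ih k' (U.erase a) (by omega) (fun S => f (insert a S)) hg
      -- choose for each matching m of size k' an unused element b m of U.erase a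
      have hbex : ∀ m ∈ mset n k' (U.erase a),
          ∃ x, x ∈ U.erase a ∧ ∀ s, (m s).1 ≠ x ∧ (m s).2 ≠ x := by
        intro m hm
        by_contra hno
        push_neg at hno
        have hsub : U.erase a ⊆
            (Finset.univ.image fun s => (m s).1) ∪ (Finset.univ.image fun s => (m s).2) := by
          intro x hx
          obtain ⟨s, hs⟩ := hno x hx
          by_cases h1 : (m s).1 = x
          · exact Finset.mem_union_left _ (Finset.mem_image.mpr ⟨s, Finset.mem_univ s, h1⟩)
          · exact Finset.mem_union_right _
              (Finset.mem_image.mpr ⟨s, Finset.mem_univ s, hs h1⟩)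
        have hcard := Finset.card_le_card hsub
        have h1 : ((Finset.univ.image fun s : Fin k' => (m s).1) ∪
            (Finset.univ.image fun s : Fin k' => (m s).2)).card ≤ 2 * k' := by
          calc ((Finset.univ.image fun s : Fin k' => (m s).1) ∪
              (Finset.univ.image fun s : Fin k' => (m s).2)).card
              ≤ (Finset.univ.image fun s : Fin k' => (m s).1).card +
                (Finset.univ.image fun s : Fin k' => (m s).2).card :=
              Finset.card_union_le _ _
            _ ≤ k' + k' := by
              gcongr <;>
                · refine le_trans (Finset.card_image_le) ?_
                  simp
            _ = 2 * k' := by ring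
        omega
      set b : (Fin k' → Fin (2 * n) × Fin (2 * n)) → Fin (2 * n) := fun m =>
        if h : ∃ x, x ∈ U.erase a ∧ ∀ s, (m s).1 ≠ x ∧ (m s).2 ≠ x then h.choose else a
        with hbdef
      have hb : ∀ m ∈ mset n k' (U.erase a),
          b m ∈ U.erase a ∧ ∀ s, (m s).1 ≠ b m ∧ (m s).2 ≠ b m := by
        intro m hm
        rw [hbdef]
        simp only
        rw [dif_pos (hbex m hm)]
        exact (hbex m hm).choose_spec
      set lift : (Fin k' → Fin (2 * n) × Fin (2 * n)) → (Fin (k' + 1) → Fin (2 * n) × Fin (2 * n)) :=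
        fun m => Fin.cons (a, b m) m with hliftdef
      -- the lift of a matching in U.erase a is a matching in U
      have hlift_mem : ∀ m ∈ mset n k' (U.erase a), lift m ∈ mset n (k' + 1) U := by
        intro m hm
        obtain ⟨hbU, hbne⟩ := hb m hm
        have hbna : b m ≠ a := (Finset.mem_erase.mp hbU).1
        rw [mem_mset] at hm ⊢
        obtain ⟨hmatch, hin⟩ := hm
        rw [isMatching_iff] at hmatch
        have hea : ∀ s, (m s).1 ≠ a ∧ (m s).2 ≠ a := by
          intro s
          exact ⟨(Finset.mem_erase.mp (hin s).1).1, (Finset.mem_erase.mp (hin s).2).1⟩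
        constructor
        · rw [isMatching_iff]
          constructor
          · intro s
            refine Fin.cases ?_ ?_ s
            · simp only [hliftdef, Fin.cons_zero]
              exact hbna.symm
            · intro t
              simp only [hliftdef, Fin.cons_succ]
              exact hmatch.1 t
          · intro s t hst
            rcases Fin.eq_zero_or_eq_succ s with rfl | ⟨s', rfl⟩ <;>
              rcases Fin.eq_zero_or_eq_succ t with rfl | ⟨t', rfl⟩
            · exact absurd rfl hst
            · simp only [hliftdef, Fin.cons_zero, Fin.cons_succ]
              exact ⟨(hea t').1.symm, (hea t').2.symm, (hbne t').1.symm, (hbne t').2.symm⟩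
            · simp only [hliftdef, Fin.cons_zero, Fin.cons_succ]
              exact ⟨(hea s').1, (hbne s').1, (hea s').2, (hbne s').2⟩
            · simp only [hliftdef, Fin.cons_succ]
              have hst' : s' ≠ t' := by
                intro h; exact hst (by rw [h])
              exact hmatch.2 s' t' hst'
        · intro s
          refine Fin.cases ?_ ?_ s
          · simp only [hliftdef, Fin.cons_zero]
            exact ⟨haU, Finset.erase_subset _ _ hbU⟩
          · intro t
            simp only [hliftdef, Fin.cons_succ]
            exact ⟨Finset.erase_subset _ _ (hin t).1, Finset.erase_subset _ _ (hin t).2⟩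
      -- value of the lift on sets containing a
      have hlift_val : ∀ m ∈ mset n k' (U.erase a), ∀ I : Finset (Fin (2 * n)),
          I.card = k' + 1 → a ∈ I →
          fmx n (k' + 1) (lift m) I = fmx n k' m (I.erase a) := by
        intro m hm I hIc haI
        obtain ⟨hbU, hbne⟩ := hb m hm
        have hbna : b m ≠ a := (Finset.mem_erase.mp hbU).1
        rw [mem_mset] at hm
        obtain ⟨hmatch, hin⟩ := hm
        have hea : ∀ s, (m s).1 ≠ a ∧ (m s).2 ≠ a := by
          intro s
          exact ⟨(Finset.mem_erase.mp (hin s).1).1, (Finset.mem_erase.mp (hin s).2).1⟩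
        unfold fmx
        rw [Fin.prod_univ_succ]
        simp only [hliftdef, Fin.cons_zero, Fin.cons_succ]
        have hrest : (∏ s : Fin k',
            ((if (m s).1 ∈ I then (1 : ℤ) else 0) - (if (m s).2 ∈ I then (1 : ℤ) else 0)))
            = ∏ s : Fin k',
            ((if (m s).1 ∈ I.erase a then (1 : ℤ) else 0) -
              (if (m s).2 ∈ I.erase a then (1 : ℤ) else 0)) := by
          refine Finset.prod_congr rfl fun s _ => ?_
          have e1 : ((m s).1 ∈ I.erase a) = ((m s).1 ∈ I) := by
            simp [Finset.mem_erase, (hea s).1]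
          have e2 : ((m s).2 ∈ I.erase a) = ((m s).2 ∈ I) := by
            simp [Finset.mem_erase, (hea s).2]
          simp only [e1, e2]
        rw [hrest]
        simp only [if_pos haI]
        by_cases hbI : b m ∈ I.erase a
        · have hz : fmx n k' m (I.erase a) = 0 := by
            apply fmx_eq_zero_of_extra hmatch (by rw [Finset.card_erase_of_mem haI, hIc]; omega)
              hbne hbI
          unfold fmx at hz
          rw [hz]
          have hbI' : b m ∈ I := Finset.mem_of_mem_erase hbI
          rw [if_pos hbI']
          ring
        · have hbI' : b m ∉ I := by
            intro h
            exact hbI (Finset.mem_erase.mpr ⟨hbna, h⟩)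
          rw [if_neg hbI']
          ring
      -- the corrected function h
      set h : Finset (Fin (2 * n)) → ℤ := fun I =>
        f I - ∑ m ∈ mset n k' (U.erase a), c m * fmx n (k' + 1) (lift m) I with hhdef
      -- h vanishes on k-subsets of U containing a
      have hH1 : ∀ I ⊆ U, I.card = k' + 1 → a ∈ I → h I = 0 := by
        intro I hIU hIc haI
        have hrw : ∀ m ∈ mset n k' (U.erase a),
            c m * fmx n (k' + 1) (lift m) I = c m * fmx n k' m (I.erase a) := by
          intro m hm
          rw [hlift_val m hm I hIc haI]
        have hfI : f I = f (insert a (I.erase a)) := by rw [Finset.insert_erase haI]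
        have herase : I.erase a ⊆ U.erase a := Finset.erase_subset_erase a hIU
        have hcard : (I.erase a).card = k' := by
          rw [Finset.card_erase_of_mem haI, hIc]
          omega
        rw [hhdef]
        simp only
        rw [Finset.sum_congr rfl hrw, hfI, hc (I.erase a) herase hcard]
        ring
      -- h satisfies the null relations on U
      have hHnullU : ∀ J ⊆ U, J.card < k' + 1 →
          ∑ I ∈ (Finset.powersetCard (k' + 1) U).filter (fun I => J ⊆ I), h I = 0 := by
        intro J hJ hJc
        rw [hhdef]
        simp only
        rw [Finset.sum_sub_distrib, hf J hJ hJc]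
        rw [Finset.sum_comm]
        have : ∀ m ∈ mset n k' (U.erase a),
            ∑ I ∈ (Finset.powersetCard (k' + 1) U).filter (fun I => J ⊆ I),
              c m * fmx n (k' + 1) (lift m) I = 0 := by
          intro m hm
          rw [← Finset.mul_sum]
          have hmem := hlift_mem m hm
          rw [mem_mset] at hmem
          rw [fmx_null hmem.1 hmem.2 hJ hJc, mul_zero]
        rw [Finset.sum_congr rfl this, Finset.sum_const, smul_zero]
        ring
      -- h satisfies the null relations on U.erase a
      have hHnull : ∀ J ⊆ U.erase a, J.card < k' + 1 →
          ∑ I ∈ (Finset.powersetCard (k' + 1) (U.erase a)).filter (fun I => J ⊆ I), h I = 0 := by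
        intro J hJ hJc
        have hJU : J ⊆ U := hJ.trans (Finset.erase_subset _ _)
        have h0 := hHnullU J hJU hJc
        rw [← Finset.sum_filter_add_sum_filter_not
          ((Finset.powersetCard (k' + 1) U).filter (fun I => J ⊆ I)) (fun I => a ∈ I)] at h0
        have hz : ∑ I ∈ ((Finset.powersetCard (k' + 1) U).filter
            (fun I => J ⊆ I)).filter (fun I => a ∈ I), h I = 0 := by
          refine Finset.sum_eq_zero fun I hI => ?_
          simp only [Finset.mem_filter, Finset.mem_powersetCard] at hI
          exact hH1 I hI.1.1.1 hI.1.1.2 hI.2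
        rw [hz, zero_add] at h0
        have hset : ((Finset.powersetCard (k' + 1) U).filter
            (fun I => J ⊆ I)).filter (fun I => ¬ a ∈ I)
            = (Finset.powersetCard (k' + 1) (U.erase a)).filter (fun I => J ⊆ I) := by
          ext I
          simp only [Finset.mem_filter, Finset.mem_powersetCard, Finset.subset_erase]
          tauto
        rw [hset] at h0
        exact h0
      obtain ⟨d, hd⟩ := ih (k' + 1) (U.erase a) (by omega) h hHnull
      -- assemble the coefficient function
      refine ⟨fun M =>
        (∑ m ∈ mset n k' (U.erase a), if lift m = M then c m else 0)
        + (if (∀ s, (M s).1 ∈ U.erase a ∧ (M s).2 ∈ U.erase a) then d M else 0), ?_⟩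
      intro I hIU hIc
      have hsplit : ∑ M ∈ mset n (k' + 1) U,
          ((∑ m ∈ mset n k' (U.erase a), if lift m = M then c m else 0)
            + (if (∀ s, (M s).1 ∈ U.erase a ∧ (M s).2 ∈ U.erase a) then d M else 0))
            * fmx n (k' + 1) M I
          = (∑ m ∈ mset n k' (U.erase a), c m * fmx n (k' + 1) (lift m) I)
            + ∑ M ∈ mset n (k' + 1) (U.erase a), d M * fmx n (k' + 1) M I := by
        have e1 : ∀ M ∈ mset n (k' + 1) U,
            ((∑ m ∈ mset n k' (U.erase a), if lift m = M then c m else 0)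
              + (if (∀ s, (M s).1 ∈ U.erase a ∧ (M s).2 ∈ U.erase a) then d M else 0))
              * fmx n (k' + 1) M I
            = (∑ m ∈ mset n k' (U.erase a),
                if lift m = M then c m * fmx n (k' + 1) M I else 0)
              + (if (∀ s, (M s).1 ∈ U.erase a ∧ (M s).2 ∈ U.erase a)
                  then d M * fmx n (k' + 1) M I else 0) := by
          intro M _
          rw [add_mul, Finset.sum_mul]
          congr 1
          · refine Finset.sum_congr rfl fun m _ => ?_
            rw [ite_mul, zero_mul]
          · rw [ite_mul, zero_mul]
        rw [Finset.sum_congr rfl e1, Finset.sum_add_distrib]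
        congr 1
        · rw [Finset.sum_comm]
          refine Finset.sum_congr rfl fun m hm => ?_
          have : ∀ M ∈ mset n (k' + 1) U,
              (if lift m = M then c m * fmx n (k' + 1) M I else 0)
              = (if lift m = M then c m * fmx n (k' + 1) (lift m) I else 0) := by
            intro M _
            split
            · next heq => rw [heq]
            · rfl
          rw [Finset.sum_congr rfl this, Finset.sum_ite_eq, if_pos (hlift_mem m hm)]
        · rw [← Finset.sum_filter]
          congr 1
          ext M
          simp only [mem_mset, Finset.mem_filter]
          constructor
          · rintro ⟨⟨h1, _⟩, h3⟩
            exact ⟨h1, h3⟩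
          · rintro ⟨h1, h2⟩
            exact ⟨⟨h1, fun s => ⟨Finset.erase_subset _ _ (h2 s).1,
              Finset.erase_subset _ _ (h2 s).2⟩⟩, h2⟩
      rw [hsplit]
      have hexp : f I = h I + ∑ m ∈ mset n k' (U.erase a), c m * fmx n (k' + 1) (lift m) I := by
        rw [hhdef]; ring
      rw [hexp]
      by_cases haI : a ∈ I
      · rw [hH1 I hIU hIc haI]
        have hz2 : ∑ M ∈ mset n (k' + 1) (U.erase a), d M * fmx n (k' + 1) M I = 0 := by
          refine Finset.sum_eq_zero fun M hM => ?_
          rw [mem_mset] at hM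
          have : fmx n (k' + 1) M I = 0 := by
            apply fmx_eq_zero_of_extra hM.1 hIc _ haI
            intro s
            exact ⟨(Finset.mem_erase.mp (hM.2 s).1).1, (Finset.mem_erase.mp (hM.2 s).2).1⟩
          rw [this, mul_zero]
        rw [hz2]
        ring
      · have hIe : I ⊆ U.erase a := Finset.subset_erase.mpr ⟨hIU, haI⟩
        rw [hd I hIe hIc]
        ring

/-- Number of elements of `Fin (2n)` of given parity. -/
lemma parity_card (n : ℕ) (r : ℕ) (hr : r < 2) :
    ((Finset.univ : Finset (Fin (2 * n))).filter (fun x : Fin (2 * n) => (x : ℕ) % 2 = r)).card = n := by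
  apply Finset.card_eq_of_bijective (fun i hi => (⟨2 * i + r, by omega⟩ : Fin (2 * n)))
  · intro a ha
    simp only [Finset.mem_filter, Finset.mem_univ, true_and] at ha
    have h2 := a.2
    refine ⟨(a : ℕ) / 2, by omega, ?_⟩
    apply Fin.ext
    simp only
    omega
  · intro i hi
    simp only [Finset.mem_filter, Finset.mem_univ, true_and]
    omega
  · intro i j hi hj hij
    have := Fin.mk.injEq _ _ _ _ ▸ hij
    simp only [Fin.mk.injEq] at hij
    omega

/-- Updating one pair of a matching preserves matching-ness under suitable
distinctness hypotheses. -/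
lemma isMatching_one_update {n k : ℕ} {m : Fin k → Fin (2 * n) × Fin (2 * n)}
    (hm : isMatching n k m) {s : Fin k} {p : Fin (2 * n) × Fin (2 * n)}
    (hp : p.1 ≠ p.2)
    (hdisj : ∀ u, u ≠ s → p.1 ≠ (m u).1 ∧ p.1 ≠ (m u).2 ∧ p.2 ≠ (m u).1 ∧ p.2 ≠ (m u).2) :
    isMatching n k (Function.update m s p) := by
  rw [isMatching_iff] at hm ⊢
  obtain ⟨hm1, hm2⟩ := hm
  constructor
  · intro u
    rcases eq_or_ne u s with rfl | hus
    · rw [Function.update_self]; exact hp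
    · rw [Function.update_of_ne hus]; exact hm1 u
  · intro u v huv
    rcases eq_or_ne u s with rfl | hus
    · rw [Function.update_self, Function.update_of_ne (Ne.symm huv)]
      exact hdisj v (Ne.symm huv)
    · rcases eq_or_ne v s with rfl | hvs
      · rw [Function.update_self, Function.update_of_ne hus]
        have := hdisj u hus
        exact ⟨(this.1).symm, (this.2.2.1).symm, (this.2.1).symm, (this.2.2.2).symm⟩
      · rw [Function.update_of_ne hus, Function.update_of_ne hvs]
        exact hm2 u v huv

/-- Redistributing the entries of two pairs of a matching preserves matching-ness. -/
lemma isMatching_two_update {n k : ℕ} {m : Fin k → Fin (2 * n) × Fin (2 * n)}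
    (hm : isMatching n k m) {s t : Fin k} (hst : s ≠ t)
    {p q : Fin (2 * n) × Fin (2 * n)}
    (hpq : p.1 ≠ p.2 ∧ p.1 ≠ q.1 ∧ p.1 ≠ q.2 ∧ p.2 ≠ q.1 ∧ p.2 ≠ q.2 ∧ q.1 ≠ q.2)
    (hdisj : ∀ u, u ≠ s → u ≠ t →
      (p.1 ≠ (m u).1 ∧ p.1 ≠ (m u).2) ∧ (p.2 ≠ (m u).1 ∧ p.2 ≠ (m u).2) ∧
      (q.1 ≠ (m u).1 ∧ q.1 ≠ (m u).2) ∧ (q.2 ≠ (m u).1 ∧ q.2 ≠ (m u).2)) :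
    isMatching n k (Function.update (Function.update m s p) t q) := by
  rw [isMatching_iff] at hm ⊢
  obtain ⟨hm1, hm2⟩ := hm
  have hval : ∀ u, u ≠ s → u ≠ t → Function.update (Function.update m s p) t q u = m u := by
    intro u hus hut
    rw [Function.update_of_ne hut, Function.update_of_ne hus]
  have hvalS : Function.update (Function.update m s p) t q s = p := by
    rw [Function.update_of_ne hst, Function.update_self]
  have hvalT : Function.update (Function.update m s p) t q t = q := by
    rw [Function.update_self]
  constructor
  · intro u
    by_cases hus : u = s
    · rw [hus, hvalS]; exact hpq.1
    · by_cases hut : u = t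
      · rw [hut, hvalT]; exact hpq.2.2.2.2.2
      · rw [hval u hus hut]; exact hm1 u
  · intro u v huv
    by_cases hus : u = s
    · by_cases hvt : v = t
      · rw [hus, hvt, hvalS, hvalT]
        exact ⟨hpq.2.1, hpq.2.2.1, hpq.2.2.2.1, hpq.2.2.2.2.1⟩
      · by_cases hvs : v = s
        · exact absurd (hus.trans hvs.symm) huv
        · rw [hus, hvalS, hval v hvs hvt]
          have := hdisj v hvs hvt
          exact ⟨this.1.1, this.1.2, this.2.1.1, this.2.1.2⟩
    · by_cases hut : u = t
      · by_cases hvs : v = s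
        · rw [hut, hvs, hvalT, hvalS]
          exact ⟨(hpq.2.1).symm, (hpq.2.2.2.1).symm, (hpq.2.2.1).symm, (hpq.2.2.2.2.1).symm⟩
        · by_cases hvt : v = t
          · exact absurd (hut.trans hvt.symm) huv
          · rw [hut, hvalT, hval v hvs hvt]
            have := hdisj v hvs hvt
            exact ⟨this.2.2.1.1, this.2.2.1.2, this.2.2.2.1, this.2.2.2.2⟩
      · by_cases hvs : v = s
        · rw [hvs, hval u hus hut, hvalS]
          have := hdisj u hus hut
          exact ⟨(this.1.1).symm, (this.2.1.1).symm, (this.1.2).symm, (this.2.1.2).symm⟩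
        · by_cases hvt : v = t
          · rw [hvt, hval u hus hut, hvalT]
            have := hdisj u hus hut
            exact ⟨(this.2.2.1.1).symm, (this.2.2.2.1).symm, (this.2.2.1.2).symm,
              (this.2.2.2.2).symm⟩
          · rw [hval u hus hut, hval v hvs hvt]
            exact hm2 u v huv

/-- single pair factor -/
def pf (n : ℕ) (I : Finset (Fin (2 * n))) (x : Fin (2 * n) × Fin (2 * n)) : ℤ :=
  (if x.1 ∈ I then (1 : ℤ) else 0) - (if x.2 ∈ I then (1 : ℤ) else 0)

lemma fmx_eq_prod_pf (n k : ℕ) (m : Fin k → Fin (2 * n) × Fin (2 * n))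
    (I : Finset (Fin (2 * n))) : fmx n k m I = ∏ s : Fin k, pf n I (m s) := rfl

lemma fmx_factor_one (n k : ℕ) (m : Fin k → Fin (2 * n) × Fin (2 * n)) (s : Fin k)
    (I : Finset (Fin (2 * n))) :
    fmx n k m I = pf n I (m s) * ∏ t ∈ Finset.univ.erase s, pf n I (m t) := by
  rw [fmx_eq_prod_pf, ← Finset.mul_prod_erase _ _ (Finset.mem_univ s)]

lemma fmx_update_one (n k : ℕ) (m : Fin k → Fin (2 * n) × Fin (2 * n)) (s : Fin k)
    (p : Fin (2 * n) × Fin (2 * n)) (I : Finset (Fin (2 * n))) :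
    fmx n k (Function.update m s p) I
      = pf n I p * ∏ t ∈ Finset.univ.erase s, pf n I (m t) := by
  rw [fmx_factor_one n k _ s, Function.update_self]
  congr 1
  refine Finset.prod_congr rfl fun t ht => ?_
  rw [Function.update_of_ne (Finset.ne_of_mem_erase ht)]

lemma fmx_factor_two (n k : ℕ) (m : Fin k → Fin (2 * n) × Fin (2 * n)) (s t : Fin k)
    (hst : s ≠ t) (I : Finset (Fin (2 * n))) :
    fmx n k m I = pf n I (m s) * pf n I (m t) *
      ∏ u ∈ (Finset.univ.erase s).erase t, pf n I (m u) := by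
  rw [fmx_eq_prod_pf, ← Finset.mul_prod_erase _ _ (Finset.mem_univ s),
    ← Finset.mul_prod_erase _ _ (Finset.mem_erase.mpr ⟨Ne.symm hst, Finset.mem_univ t⟩),
    ← mul_assoc]

lemma fmx_update_two (n k : ℕ) (m : Fin k → Fin (2 * n) × Fin (2 * n)) (s t : Fin k)
    (hst : s ≠ t) (p q : Fin (2 * n) × Fin (2 * n)) (I : Finset (Fin (2 * n))) :
    fmx n k (Function.update (Function.update m s p) t q) I
      = pf n I p * pf n I q * ∏ u ∈ (Finset.univ.erase s).erase t, pf n I (m u) := by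
  rw [fmx_factor_two n k _ s t hst, Function.update_self,
    Function.update_of_ne hst, Function.update_self]
  congr 1
  refine Finset.prod_congr rfl fun u hu => ?_
  have hut : u ≠ t := Finset.ne_of_mem_erase hu
  have hus : u ≠ s := Finset.ne_of_mem_erase (Finset.mem_of_mem_erase hu)
  rw [Function.update_of_ne hut, Function.update_of_ne hus]

lemma parity_ne {n : ℕ} {x y : Fin (2 * n)} (h : (x : ℕ) % 2 ≠ (y : ℕ) % 2) : x ≠ y :=
  fun he => h (by rw [he])

/-- Balancing: every `fmx` of a matching is a ℤ-combination of `fmx` of balanced matchings. -/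
lemma balance (n k : ℕ) (hk : k ≤ n) :
    ∀ (u : ℕ) (m : Fin k → Fin (2 * n) × Fin (2 * n)), isMatching n k m →
      (Finset.univ.filter
        (fun s : Fin k => ((m s).1 : ℕ) % 2 = ((m s).2 : ℕ) % 2)).card ≤ u →
      ∃ d : (Fin k → Fin (2 * n) × Fin (2 * n)) → ℤ, ∀ I,
        fmx n k m I = ∑ m' ∈ Finset.univ.filter
          (fun m' => isMatching n k m' ∧ isBalanced n k m'), d m' * fmx n k m' I := by
  intro u
  induction u with
  | zero =>
    intro m hm hub
    have hbal : isBalanced n k m := by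
      intro s hc
      have hmem : s ∈ Finset.univ.filter
          (fun s : Fin k => ((m s).1 : ℕ) % 2 = ((m s).2 : ℕ) % 2) :=
        Finset.mem_filter.mpr ⟨Finset.mem_univ s, hc⟩
      have := Finset.card_pos.mpr ⟨s, hmem⟩
      omega
    refine ⟨fun m' => if m' = m then 1 else 0, fun I => ?_⟩
    have hrw : ∀ m' ∈ Finset.univ.filter
        (fun m' => isMatching n k m' ∧ isBalanced n k m'),
        (if m' = m then (1 : ℤ) else 0) * fmx n k m' I
        = if m' = m then fmx n k m' I else 0 := by
      intro m' _
      split <;> ring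
    rw [Finset.sum_congr rfl hrw, Finset.sum_ite_eq' _ m (fun m' => fmx n k m' I),
      if_pos (Finset.mem_filter.mpr ⟨Finset.mem_univ m, hm, hbal⟩)]
  | succ u ih =>
    intro m hm hub
    by_cases hle : (Finset.univ.filter
        (fun s : Fin k => ((m s).1 : ℕ) % 2 = ((m s).2 : ℕ) % 2)).card ≤ u
    · exact ih m hm hle
    have hcard : (Finset.univ.filter
        (fun s : Fin k => ((m s).1 : ℕ) % 2 = ((m s).2 : ℕ) % 2)).card = u + 1 := by omega
    have hpos : 0 < (Finset.univ.filter
        (fun s : Fin k => ((m s).1 : ℕ) % 2 = ((m s).2 : ℕ) % 2)).card := by omega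
    obtain ⟨s, hsmem⟩ := Finset.card_pos.mp hpos
    have hs2 : ((m s).1 : ℕ) % 2 = ((m s).2 : ℕ) % 2 := (Finset.mem_filter.mp hsmem).2
    have hm' := isMatching_iff.mp hm
    have hplt : ((m s).1 : ℕ) % 2 < 2 := Nat.mod_lt _ (by omega)
    by_cases hfree : ∃ l : Fin (2 * n), (l : ℕ) % 2 = 1 - ((m s).1 : ℕ) % 2 ∧
        ∀ t, (m t).1 ≠ l ∧ (m t).2 ≠ l
    · -- split move using a free element of opposite parity
      obtain ⟨l, hl1, hl2⟩ := hfree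
      have hil : (m s).1 ≠ l := parity_ne (by omega)
      have hjl : l ≠ (m s).2 := parity_ne (by omega)
      have hm₁ : isMatching n k (Function.update m s ((m s).1, l)) := by
        refine isMatching_one_update hm hil ?_
        intro v hvs
        have h4 := hm'.2 s v (Ne.symm hvs)
        exact ⟨h4.1, h4.2.1, (hl2 v).1.symm, (hl2 v).2.symm⟩
      have hm₂ : isMatching n k (Function.update m s (l, (m s).2)) := by
        refine isMatching_one_update hm hjl ?_
        intro v hvs
        have h4 := hm'.2 s v (Ne.symm hvs)
        exact ⟨(hl2 v).1.symm, (hl2 v).2.symm, h4.2.2.1, h4.2.2.2⟩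
      have hsub1 : ∀ (pnew : Fin (2 * n) × Fin (2 * n)),
          ((pnew.1 : ℕ) % 2 ≠ (pnew.2 : ℕ) % 2) →
          (Finset.univ.filter (fun v : Fin k =>
            (((Function.update m s pnew) v).1 : ℕ) % 2
              = (((Function.update m s pnew) v).2 : ℕ) % 2)).card ≤ u := by
        intro pnew hpnew
        have hsub : Finset.univ.filter (fun v : Fin k =>
            (((Function.update m s pnew) v).1 : ℕ) % 2
              = (((Function.update m s pnew) v).2 : ℕ) % 2)
            ⊆ (Finset.univ.filter
              (fun v : Fin k => ((m v).1 : ℕ) % 2 = ((m v).2 : ℕ) % 2)).erase s := by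
          intro v hv
          rw [Finset.mem_filter] at hv
          by_cases hvs : v = s
          · exfalso
            rw [hvs, Function.update_self] at hv
            exact hpnew hv.2
          · rw [Function.update_of_ne hvs] at hv
            exact Finset.mem_erase.mpr ⟨hvs, Finset.mem_filter.mpr ⟨Finset.mem_univ v, hv.2⟩⟩
        have h5 := Finset.card_le_card hsub
        rw [Finset.card_erase_of_mem hsmem, hcard] at h5
        omega
      obtain ⟨d₁, hd₁⟩ := ih _ hm₁ (hsub1 ((m s).1, l) (by simpa using (by omega : ((m s).1 : ℕ) % 2 ≠ (l : ℕ) % 2)))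
      obtain ⟨d₂, hd₂⟩ := ih _ hm₂ (hsub1 (l, (m s).2) (by simpa using (by omega : (l : ℕ) % 2 ≠ ((m s).2 : ℕ) % 2)))
      refine ⟨fun m' => d₁ m' + d₂ m', fun I => ?_⟩
      have hsplit : fmx n k m I = fmx n k (Function.update m s ((m s).1, l)) I
          + fmx n k (Function.update m s (l, (m s).2)) I := by
        rw [fmx_factor_one n k m s I, fmx_update_one, fmx_update_one]
        unfold pf
        simp only
        ring
      rw [hsplit, hd₁ I, hd₂ I, ← Finset.sum_add_distrib]
      exact Finset.sum_congr rfl fun m' _ => by ring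
    · -- no free element: find another unbalanced pair of opposite parity
      push_neg at hfree
      have hex : ∃ t, t ≠ s ∧ ((m t).1 : ℕ) % 2 = 1 - ((m s).1 : ℕ) % 2 ∧
          ((m t).2 : ℕ) % 2 = 1 - ((m s).1 : ℕ) % 2 := by
        by_contra hno
        push_neg at hno
        have hsub : (Finset.univ.filter
            (fun x : Fin (2 * n) => (x : ℕ) % 2 = 1 - ((m s).1 : ℕ) % 2))
            ⊆ Finset.image (fun t => if ((m t).1 : ℕ) % 2 = 1 - ((m s).1 : ℕ) % 2
                then (m t).1 else (m t).2) (Finset.univ.erase s) := by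
          intro x hx
          rw [Finset.mem_filter] at hx
          obtain ⟨t, ht⟩ := hfree x hx.2
          have hx1 : (x : ℕ) % 2 = 1 - ((m s).1 : ℕ) % 2 := hx.2
          have hts : t ≠ s := by
            intro he
            subst he
            by_cases h : (m t).1 = x
            · have hcoe := congrArg (fun z : Fin (2 * n) => (z : ℕ) % 2) h
              omega
            · have h2 := ht h
              have hcoe := congrArg (fun z : Fin (2 * n) => (z : ℕ) % 2) h2
              omega
          refine Finset.mem_image.mpr ⟨t, Finset.mem_erase.mpr ⟨hts, Finset.mem_univ t⟩, ?_⟩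
          by_cases h : (m t).1 = x
          · rw [if_pos (by rw [h]; exact hx1)]
            exact h
          · have h2 := ht h
            by_cases hcond : ((m t).1 : ℕ) % 2 = 1 - ((m s).1 : ℕ) % 2
            · exact absurd (by rw [h2]; exact hx1) (hno t hts hcond)
            · rw [if_neg hcond]
              exact h2
        have hcard2 := Finset.card_le_card hsub
        rw [parity_card n (1 - ((m s).1 : ℕ) % 2) (by omega)] at hcard2
        have h6 : (Finset.image (fun t => if ((m t).1 : ℕ) % 2 = 1 - ((m s).1 : ℕ) % 2
            then (m t).1 else (m t).2) (Finset.univ.erase s)).card ≤ k - 1 := by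
          refine le_trans Finset.card_image_le ?_
          rw [Finset.card_erase_of_mem (Finset.mem_univ s)]
          simp
        have hk1 : 1 ≤ k := by
          have := s.2; omega
        omega
      obtain ⟨t, hts, hq1, hq2⟩ := hex
      have hst : s ≠ t := Ne.symm hts
      -- the four entries and their parities
      have hi : ((m s).1 : ℕ) % 2 = ((m s).1 : ℕ) % 2 := rfl
      have hic : (m s).1 ≠ (m t).1 := parity_ne (by omega)
      have hid : (m s).1 ≠ (m t).2 := parity_ne (by omega)
      have hjc : (m s).2 ≠ (m t).1 := parity_ne (by omega)
      have hjd : (m s).2 ≠ (m t).2 := parity_ne (by omega)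
      have hm₁ : isMatching n k (Function.update (Function.update m s ((m s).1, (m t).1))
          t ((m s).2, (m t).2)) := by
        refine isMatching_two_update hm hst
          ⟨hic, hm'.1 s, hid, hjc.symm, hm'.1 t, hjd⟩ ?_
        intro v hvs hvt
        have h4s := hm'.2 s v (Ne.symm hvs)
        have h4t := hm'.2 t v (Ne.symm hvt)
        exact ⟨⟨h4s.1, h4s.2.1⟩, ⟨h4t.1, h4t.2.1⟩, ⟨h4s.2.2.1, h4s.2.2.2⟩,
          ⟨h4t.2.2.1, h4t.2.2.2⟩⟩
      have hm₂ : isMatching n k (Function.update (Function.update m s ((m s).1, (m t).2))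
          t ((m s).2, (m t).1)) := by
        refine isMatching_two_update hm hst
          ⟨hid, hm'.1 s, hic, hjd.symm, (hm'.1 t).symm, hjc⟩ ?_
        intro v hvs hvt
        have h4s := hm'.2 s v (Ne.symm hvs)
        have h4t := hm'.2 t v (Ne.symm hvt)
        exact ⟨⟨h4s.1, h4s.2.1⟩, ⟨h4t.2.2.1, h4t.2.2.2⟩, ⟨h4s.2.2.1, h4s.2.2.2⟩,
          ⟨h4t.1, h4t.2.1⟩⟩
      -- unbalanced-pair counts decrease
      have hsub2 : ∀ (pnew qnew : Fin (2 * n) × Fin (2 * n)),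
          ((pnew.1 : ℕ) % 2 ≠ (pnew.2 : ℕ) % 2) → ((qnew.1 : ℕ) % 2 ≠ (qnew.2 : ℕ) % 2) →
          (Finset.univ.filter (fun v : Fin k =>
            (((Function.update (Function.update m s pnew) t qnew) v).1 : ℕ) % 2
              = (((Function.update (Function.update m s pnew) t qnew) v).2 : ℕ) % 2)).card
            ≤ u := by
        intro pnew qnew hp hq
        have hsub : Finset.univ.filter (fun v : Fin k =>
            (((Function.update (Function.update m s pnew) t qnew) v).1 : ℕ) % 2
              = (((Function.update (Function.update m s pnew) t qnew) v).2 : ℕ) % 2)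
            ⊆ (Finset.univ.filter
              (fun v : Fin k => ((m v).1 : ℕ) % 2 = ((m v).2 : ℕ) % 2)).erase s := by
          intro v hv
          rw [Finset.mem_filter] at hv
          by_cases hvt : v = t
          · exfalso
            rw [hvt, Function.update_self] at hv
            exact hq hv.2
          · by_cases hvs : v = s
            · exfalso
              rw [hvs, Function.update_of_ne hst, Function.update_self] at hv
              exact hp hv.2
            · rw [Function.update_of_ne hvt, Function.update_of_ne hvs] at hv
              exact Finset.mem_erase.mpr ⟨hvs, Finset.mem_filter.mpr ⟨Finset.mem_univ v, hv.2⟩⟩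
        have h5 := Finset.card_le_card hsub
        rw [Finset.card_erase_of_mem hsmem, hcard] at h5
        omega
      obtain ⟨d₁, hd₁⟩ := ih _ hm₁
        (hsub2 ((m s).1, (m t).1) ((m s).2, (m t).2)
          (show ((m s).1 : ℕ) % 2 ≠ ((m t).1 : ℕ) % 2 by omega)
          (show ((m s).2 : ℕ) % 2 ≠ ((m t).2 : ℕ) % 2 by omega))
      obtain ⟨d₂, hd₂⟩ := ih _ hm₂
        (hsub2 ((m s).1, (m t).2) ((m s).2, (m t).1)
          (show ((m s).1 : ℕ) % 2 ≠ ((m t).2 : ℕ) % 2 by omega)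
          (show ((m s).2 : ℕ) % 2 ≠ ((m t).1 : ℕ) % 2 by omega))
      refine ⟨fun m' => d₁ m' - d₂ m', fun I => ?_⟩
      have hsplit : fmx n k m I
          = fmx n k (Function.update (Function.update m s ((m s).1, (m t).1))
              t ((m s).2, (m t).2)) I
            - fmx n k (Function.update (Function.update m s ((m s).1, (m t).2))
              t ((m s).2, (m t).1)) I := by
        rw [fmx_factor_two n k m s t hst I, fmx_update_two n k m s t hst,
          fmx_update_two n k m s t hst]
        unfold pf
        simp only
        ring
      rw [hsplit, hd₁ I, hd₂ I, ← Finset.sum_sub_distrib]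
      exact Finset.sum_congr rfl fun m' _ => by ring

/-- Any ℤ-valued function f on the k-element subsets of {1,…,2n}
satisfying the relations Σ_{|I|=k, J⊆I} f(I) = 0 for all |J| < k is an integer linear
combination of the f_m over balanced partial matchings m of cardinality k. -/
theorem stmt6 (n k : ℕ) (hn : 1 ≤ n) (hk : k ≤ n) (f : Finset (Fin (2 * n)) → ℤ)
    (hf : ∀ J : Finset (Fin (2 * n)), J.card < k →
      ∑ I ∈ (Finset.powersetCard k (Finset.univ : Finset (Fin (2 * n)))).filter
          (fun I => J ⊆ I), f I = 0) :
    ∃ c : (Fin k → Fin (2 * n) × Fin (2 * n)) → ℤ,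
      ∀ I : Finset (Fin (2 * n)), I.card = k →
        f I =
          ∑ m ∈ Finset.univ.filter
              (fun m : Fin k → Fin (2 * n) × Fin (2 * n) =>
                isMatching n k m ∧ isBalanced n k m),
            c m * fm n k m I := by
  obtain ⟨c, hc⟩ := main_span n (k + (Finset.univ : Finset (Fin (2 * n))).card) k
    Finset.univ le_rfl f (fun J _ hJc => hf J hJc)
  have hbal : ∀ m ∈ mset n k (Finset.univ : Finset (Fin (2 * n))),
      ∃ d : (Fin k → Fin (2 * n) × Fin (2 * n)) → ℤ, ∀ I,
        fmx n k m I = ∑ m' ∈ Finset.univ.filter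
          (fun m' => isMatching n k m' ∧ isBalanced n k m'), d m' * fmx n k m' I := by
    intro m hm
    exact balance n k hk _ m (mem_mset.mp hm).1 le_rfl
  choose d hd using hbal
  refine ⟨fun m' => ∑ m ∈ (mset n k (Finset.univ : Finset (Fin (2 * n)))).attach,
    c m.1 * d m.1 m.2 m', ?_⟩
  intro I hIc
  have h1 : f I = ∑ m ∈ mset n k (Finset.univ : Finset (Fin (2 * n))),
      c m * fmx n k m I := hc I (Finset.subset_univ I) hIc
  have h2 : f I = ∑ m ∈ (mset n k (Finset.univ : Finset (Fin (2 * n)))).attach,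
      c m.1 * fmx n k m.1 I := by
    rw [h1, ← Finset.sum_attach (mset n k Finset.univ) (fun m => c m * fmx n k m I)]
  rw [h2]
  have h3 : ∀ m ∈ (mset n k (Finset.univ : Finset (Fin (2 * n)))).attach,
      c m.1 * fmx n k m.1 I
      = ∑ m' ∈ Finset.univ.filter
          (fun m' => isMatching n k m' ∧ isBalanced n k m'),
          c m.1 * (d m.1 m.2 m' * fmx n k m' I) := by
    intro m _
    rw [← Finset.mul_sum, hd m.1 m.2 I]
  rw [Finset.sum_congr rfl h3, Finset.sum_comm]
  refine Finset.sum_congr rfl fun m' _ => ?_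
  rw [Finset.sum_mul, fm_eq_fmx]
  refine Finset.sum_congr rfl fun m _ => by ring
end

section
/- For every n ≥ 1 and every 0 ≤ k ≤ n, the number of admissible k-element subsets of {1,…,2n} equals C(2n,k) − C(2n,k−1) (with the convention C(2n,−1) = 0). Moreover, there are no admissible subsets of {1,…,2n} of cardinality greater than n. -/
namespace Stmt7Aux

variable {N : ℕ}

/-- prefix count: number of elements of `I` among the first `m` positions. -/
def pc (I : Finset (Fin N)) (m : ℕ) : ℕ :=
  (I.filter fun i : Fin N => (i : ℕ) + 1 ≤ m).card

lemma pc_zero (I : Finset (Fin N)) : pc I 0 = 0 := by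
  simp [pc]

lemma pc_of_ge (I : Finset (Fin N)) {m : ℕ} (h : N ≤ m) : pc I m = I.card := by
  unfold pc
  rw [Finset.filter_true_of_mem]
  intro i _
  have := i.isLt
  omega

lemma pc_succ_le (I : Finset (Fin N)) (m : ℕ) : pc I (m + 1) ≤ pc I m + 1 := by
  unfold pc
  have hsub : (I.filter fun i : Fin N => (i : ℕ) + 1 ≤ m + 1) ⊆
      (I.filter fun i : Fin N => (i : ℕ) + 1 ≤ m) ∪ (I.filter fun i : Fin N => (i : ℕ) = m) := by
    intro i hi
    simp only [Finset.mem_filter, Finset.mem_union] at *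
    rcases hi with ⟨hiI, hle⟩
    by_cases hc : (i : ℕ) + 1 ≤ m
    · exact Or.inl ⟨hiI, hc⟩
    · exact Or.inr ⟨hiI, by omega⟩
  calc (I.filter fun i : Fin N => (i : ℕ) + 1 ≤ m + 1).card
      ≤ ((I.filter fun i : Fin N => (i : ℕ) + 1 ≤ m) ∪
          (I.filter fun i : Fin N => (i : ℕ) = m)).card := Finset.card_le_card hsub
    _ ≤ (I.filter fun i : Fin N => (i : ℕ) + 1 ≤ m).card +
          (I.filter fun i : Fin N => (i : ℕ) = m).card := Finset.card_union_le _ _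
    _ ≤ (I.filter fun i : Fin N => (i : ℕ) + 1 ≤ m).card + 1 := by
        gcongr
        apply Finset.card_le_one.mpr
        intro a ha b hb
        simp only [Finset.mem_filter] at ha hb
        exact Fin.ext (ha.2.trans hb.2.symm)

lemma pc_le_card (I : Finset (Fin N)) (m : ℕ) : pc I m ≤ I.card :=
  Finset.card_le_card (Finset.filter_subset _ _)

/-- the reflection of `I` at position `m` : keep positions `< m`, flip positions `≥ m`. -/
def Rf (m : ℕ) (I : Finset (Fin N)) : Finset (Fin N) :=
  Finset.univ.filter fun i : Fin N => ((i : ℕ) < m ∧ i ∈ I) ∨ (m ≤ (i : ℕ) ∧ i ∉ I)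

lemma mem_Rf {m : ℕ} {I : Finset (Fin N)} {i : Fin N} :
    i ∈ Rf m I ↔ (((i : ℕ) < m ∧ i ∈ I) ∨ (m ≤ (i : ℕ) ∧ i ∉ I)) := by
  simp [Rf]

lemma Rf_Rf (m : ℕ) (I : Finset (Fin N)) : Rf m (Rf m I) = I := by
  ext i
  by_cases h : (i : ℕ) < m
  · have h' : ¬ m ≤ (i : ℕ) := by omega
    by_cases hI : i ∈ I <;> simp [mem_Rf, h, h', hI]
  · have h' : m ≤ (i : ℕ) := by omega
    by_cases hI : i ∈ I <;> simp [mem_Rf, h, h', hI]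

lemma pc_Rf_of_le {m j : ℕ} (h : j ≤ m) (I : Finset (Fin N)) : pc (Rf m I) j = pc I j := by
  unfold pc
  congr 1
  ext i
  simp only [Finset.mem_filter, mem_Rf]
  constructor
  · rintro ⟨hmem, hle⟩
    refine ⟨?_, hle⟩
    rcases hmem with ⟨_, hI⟩ | ⟨hge, _⟩
    · exact hI
    · exact absurd hle (by omega)
  · rintro ⟨hI, hle⟩
    exact ⟨Or.inl ⟨by omega, hI⟩, hle⟩

lemma card_univ_filter_lt (m : ℕ) :
    ((Finset.univ : Finset (Fin N)).filter fun i : Fin N => (i : ℕ) < m).card = min m N := by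
  have : ((Finset.univ : Finset (Fin N)).filter fun i : Fin N => (i : ℕ) < m) =
      (Finset.range (min m N)).attachFin (by intro x hx; simp at hx; omega) := by
    ext i
    simp only [Finset.mem_filter, Finset.mem_univ, true_and, Finset.mem_attachFin,
      Finset.mem_range]
    omega
  rw [this, Finset.card_attachFin, Finset.card_range]

lemma card_Rf {m : ℕ} (hm : m ≤ N) (I : Finset (Fin N)) :
    (Rf m I).card + I.card + m = 2 * pc I m + N := by
  classical
  -- A = elements of I below m ; B = non-elements of I at/above m
  have hA : (I.filter fun i : Fin N => (i : ℕ) < m).card = pc I m := by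
    unfold pc
    congr 1
  have hsplitI : (I.filter fun i : Fin N => (i : ℕ) < m).card +
      (I.filter fun i : Fin N => m ≤ (i : ℕ)).card = I.card := by
    have h1 := Finset.card_filter_add_card_filter_not (s := I)
      (fun i : Fin N => (i : ℕ) < m)
    have h3 : (I.filter fun i : Fin N => ¬ (i : ℕ) < m) =
        (I.filter fun i : Fin N => m ≤ (i : ℕ)) := by
      apply Finset.filter_congr
      intro i _
      exact not_lt
    rw [h3] at h1
    exact h1
  have hsplitU : ((Finset.univ : Finset (Fin N)).filter fun i : Fin N => m ≤ (i : ℕ)).card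
      + m = N := by
    have h1 := Finset.card_filter_add_card_filter_not
      (s := (Finset.univ : Finset (Fin N))) (fun i : Fin N => (i : ℕ) < m)
    have h2 := card_univ_filter_lt (N := N) m
    have h3 : ((Finset.univ : Finset (Fin N)).filter fun i : Fin N => ¬ (i : ℕ) < m) =
        ((Finset.univ : Finset (Fin N)).filter fun i : Fin N => m ≤ (i : ℕ)) := by
      apply Finset.filter_congr
      intro i _
      exact not_lt
    rw [h3] at h1
    simp only [Finset.card_univ, Fintype.card_fin] at h1
    omega
  have hRf : (Rf m I).card = (I.filter fun i : Fin N => (i : ℕ) < m).card +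
      ((Finset.univ : Finset (Fin N)).filter fun i : Fin N => m ≤ (i : ℕ) ∧ i ∉ I).card := by
    rw [← Finset.card_union_of_disjoint]
    · congr 1
      ext i
      simp only [mem_Rf, Finset.mem_union, Finset.mem_filter, Finset.mem_univ, true_and]
      tauto
    · rw [Finset.disjoint_left]
      intro a ha hb
      simp only [Finset.mem_filter, Finset.mem_univ, true_and] at ha hb
      omega
  have hBsplit : ((Finset.univ : Finset (Fin N)).filter fun i : Fin N => m ≤ (i : ℕ) ∧ i ∉ I).card
      + (I.filter fun i : Fin N => m ≤ (i : ℕ)).card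
      = ((Finset.univ : Finset (Fin N)).filter fun i : Fin N => m ≤ (i : ℕ)).card := by
    rw [← Finset.card_union_of_disjoint]
    · congr 1
      ext i
      simp only [Finset.mem_union, Finset.mem_filter, Finset.mem_univ, true_and]
      by_cases h : i ∈ I <;> simp [h]
    · rw [Finset.disjoint_left]
      intro a ha hb
      simp only [Finset.mem_filter, Finset.mem_univ, true_and] at ha hb
      exact ha.2 hb.1
  omega

lemma first_viol {I : Finset (Fin N)} (h : ∃ m, m < 2 * pc I m) :
    1 ≤ Nat.find h ∧ Nat.find h ≤ N ∧ 2 * pc I (Nat.find h) = Nat.find h + 1 := by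
  have hspec := Nat.find_spec h
  have h1 : 1 ≤ Nat.find h := by
    rcases Nat.eq_zero_or_pos (Nat.find h) with h0 | h0
    · rw [h0] at hspec; rw [pc_zero] at hspec; omega
    · exact h0
  have hle : Nat.find h ≤ N := by
    by_contra hN
    push_neg at hN
    have hc : pc I (Nat.find h) = I.card := pc_of_ge I (by omega)
    have hc2 : pc I N = I.card := pc_of_ge I le_rfl
    have : N < 2 * pc I N := by omega
    exact absurd (Nat.find_min h hN) (by simp [this])
  refine ⟨h1, hle, ?_⟩
  have hmin : ¬ (Nat.find h - 1 < 2 * pc I (Nat.find h - 1)) := Nat.find_min h (by omega)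
  have hsucc : pc I (Nat.find h - 1 + 1) ≤ pc I (Nat.find h - 1) + 1 := pc_succ_le I _
  have heq : Nat.find h - 1 + 1 = Nat.find h := by omega
  rw [heq] at hsucc
  omega

lemma find_eq {I : Finset (Fin N)} (h : ∃ m, m < 2 * pc I m)
    (h' : ∃ m, m < 2 * pc (Rf (Nat.find h) I) m) : Nat.find h' = Nat.find h := by
  apply le_antisymm
  · apply Nat.find_le
    rw [pc_Rf_of_le le_rfl]
    exact Nat.find_spec h
  · rw [Nat.le_find_iff]
    intro j hj
    rw [pc_Rf_of_le (le_of_lt hj)]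
    exact Nat.find_min h hj

end Stmt7Aux

open Stmt7Aux in
lemma admissible_iff_pc {n : ℕ} (hn : 1 ≤ n) (I : Finset (Fin (2 * n))) :
    admissible n I ↔ ∀ m, 2 * pc I m ≤ m := by
  constructor
  · intro h m
    rcases Nat.lt_or_ge m 1 with h0 | h1
    · interval_cases m
      simp [pc_zero]
    rcases le_or_gt m (2 * n) with h2 | h2
    · exact h m (Finset.mem_Icc.mpr ⟨h1, h2⟩)
    · have hc : 2 * pc I (2 * n) ≤ 2 * n :=
        h (2 * n) (Finset.mem_Icc.mpr ⟨by omega, le_rfl⟩)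
      have h3 : pc I m = I.card := pc_of_ge I (by omega)
      have h4 : pc I (2 * n) = I.card := pc_of_ge I le_rfl
      omega
  · intro h m _
    exact h m

/-- The number of admissible k-element subsets of {1,…,2n} equals
C(2n,k) − C(2n,k−1) for every 0 ≤ k ≤ n, and every admissible subset has cardinality
at most n. -/
theorem stmt7 (n : ℕ) (hn : 1 ≤ n) :
    (∀ k : ℕ, k ≤ n →
      ((Finset.powersetCard k (Finset.univ : Finset (Fin (2 * n)))).filter
          (admissible n)).card
        = Nat.choose (2 * n) k - (if k = 0 then 0 else Nat.choose (2 * n) (k - 1))) ∧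
    (∀ I : Finset (Fin (2 * n)), admissible n I → I.card ≤ n) := by
  classical
  open Stmt7Aux in
  have part2 : ∀ I : Finset (Fin (2 * n)), admissible n I → I.card ≤ n := by
    intro I hI
    have h1 : 2 * pc I (2 * n) ≤ 2 * n := (admissible_iff_pc hn I).mp hI (2 * n)
    have h2 : pc I (2 * n) = I.card := pc_of_ge I le_rfl
    omega
  refine ⟨?_, part2⟩
  intro k hk
  by_cases hk0 : k = 0
  · subst hk0
    rw [if_pos rfl, Finset.powersetCard_zero, Nat.choose_zero_right]
    have hadm : admissible n (∅ : Finset (Fin (2 * n))) := by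
      intro m _
      simp
    rw [Finset.filter_singleton, if_pos hadm, Finset.card_singleton]
  · rw [if_neg hk0]
    -- badness witnesses
    have exS : ∀ I ∈ (Finset.powersetCard k (Finset.univ : Finset (Fin (2 * n)))).filter
        (fun I => ¬ admissible n I), ∃ m, m < 2 * pc I m := by
      intro I hI
      have hbad : ¬ admissible n I := (Finset.mem_filter.mp hI).2
      rw [admissible_iff_pc hn] at hbad
      push_neg at hbad
      exact hbad
    have exT : ∀ J ∈ Finset.powersetCard (2 * n + 1 - k)
        (Finset.univ : Finset (Fin (2 * n))), ∃ m, m < 2 * pc J m := by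
      intro J hJ
      have hc : J.card = 2 * n + 1 - k := Finset.mem_powersetCard_univ.mp hJ
      refine ⟨2 * n, ?_⟩
      rw [pc_of_ge J le_rfl]
      omega
    have hbadcard : ((Finset.powersetCard k (Finset.univ : Finset (Fin (2 * n)))).filter
        (fun I => ¬ admissible n I)).card
        = (Finset.powersetCard (2 * n + 1 - k) (Finset.univ : Finset (Fin (2 * n)))).card := by
      apply Finset.card_bij' (i := fun I hI => Rf (Nat.find (exS I hI)) I)
        (j := fun J hJ => Rf (Nat.find (exT J hJ)) J)
      · intro I hI
        rw [find_eq (exS I hI), Rf_Rf]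
      · intro J hJ
        rw [find_eq (exT J hJ), Rf_Rf]
      · intro I hI
        have hIc : I.card = k := Finset.mem_powersetCard_univ.mp (Finset.mem_filter.mp hI).1
        obtain ⟨h1, h2, h3⟩ := first_viol (exS I hI)
        have h4 := card_Rf h2 I
        rw [Finset.mem_powersetCard_univ]
        omega
      · intro J hJ
        have hJc : J.card = 2 * n + 1 - k := Finset.mem_powersetCard_univ.mp hJ
        obtain ⟨h1, h2, h3⟩ := first_viol (exT J hJ)
        have h4 := card_Rf h2 J
        rw [Finset.mem_filter, Finset.mem_powersetCard_univ]
        constructor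
        · omega
        · rw [admissible_iff_pc hn]
          push_neg
          refine ⟨Nat.find (exT J hJ), ?_⟩
          rw [pc_Rf_of_le le_rfl]
          exact Nat.find_spec (exT J hJ)
    have hT : (Finset.powersetCard (2 * n + 1 - k)
        (Finset.univ : Finset (Fin (2 * n)))).card = Nat.choose (2 * n) (k - 1) := by
      rw [Finset.card_powersetCard, Finset.card_univ, Fintype.card_fin]
      have h1 : 2 * n + 1 - k = 2 * n - (k - 1) := by omega
      rw [h1]
      exact Nat.choose_symm (by omega)
    have hsplit := Finset.card_filter_add_card_filter_not
      (s := Finset.powersetCard k (Finset.univ : Finset (Fin (2 * n)))) (admissible n)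
    have htot : (Finset.powersetCard k (Finset.univ : Finset (Fin (2 * n)))).card
        = Nat.choose (2 * n) k := by
      rw [Finset.card_powersetCard, Finset.card_univ, Fintype.card_fin]
    have hmono : Nat.choose (2 * n) (k - 1) ≤ Nat.choose (2 * n) k := by
      have := Nat.choose_le_succ_of_lt_half_left (r := k - 1) (n := 2 * n) (by omega)
      have hk1 : k - 1 + 1 = k := by omega
      rwa [hk1] at this
    omega
end

section
/- Let n ≥ 0, let S = ℤ[X_1,…,X_{2n+1}]/(X_1²,…,X_{2n+1}²), graded with deg X_i = 2, and let Q = S/J, where J is the S-ideal generated by the elements Σ_{|I|=k, I⊆{1,…,2n}} X_I for k = 1,…,2n (sums over all k-element subsets I of the first 2n indices, with X_I = ∏_{i∈I} X_i). Since J is generated by homogeneous elements, Q is a graded S-module. Then the only S-module automorphisms of Q that preserve each graded component are +identity and −identity. -/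
/-!
Context: S = ℤ[X_1,…,X_{2n+1}]/(X_1²,…,X_{2n+1}²), graded with deg X_i = 2 (so the
degree-2k component is the image of the homogeneous polynomials of standard degree
k), and Q = S/J, where J is the S-ideal generated by the elements
Σ_{|I|=k, I⊆{1,…,2n}} X_I for k = 1,…,2n (sums over the k-element subsets of the
first 2n variables).  We model {1,…,2n+1} by Fin (2n+1), the first 2n indices being
those i with (i : ℕ) < 2n.

Statement 11:  The only S-module automorphisms of Q preserving each graded component
are +id and −id.
-/

open MvPolynomial

namespace Stmt11

noncomputable section

/-- The polynomial ring ℤ[X_1,…,X_{2n+1}]. -/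
abbrev Poly (n : ℕ) := MvPolynomial (Fin (2 * n + 1)) ℤ

/-- The ideal (X_1²,…,X_{2n+1}²). -/
def Isq (n : ℕ) : Ideal (Poly n) :=
  Ideal.span (Set.range fun i : Fin (2 * n + 1) => (X i : Poly n) ^ 2)

/-- S = ℤ[X_1,…,X_{2n+1}]/(X_1²,…,X_{2n+1}²). -/
abbrev S (n : ℕ) := Poly n ⧸ Isq n

/-- The polynomial Σ_{|I|=k, I ⊆ {1,…,2n}} X_I. -/
def symEl (n k : ℕ) : Poly n :=
  ∑ I ∈ Finset.powersetCard k
      (Finset.univ.filter fun i : Fin (2 * n + 1) => (i : ℕ) < 2 * n),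
    ∏ i ∈ I, X i

/-- The S-ideal J generated by the classes of the symEl n k, k = 1,…,2n. -/
def J (n : ℕ) : Ideal (S n) :=
  Ideal.span {s | ∃ k : ℕ, 1 ≤ k ∧ k ≤ 2 * n ∧ s = Ideal.Quotient.mk (Isq n) (symEl n k)}

/-- Q = S/J. -/
abbrev Q (n : ℕ) := S n ⧸ J n

/-- The degree-2k graded component of Q (deg X_i = 2): the image in Q of the
homogeneous polynomials of standard degree k. -/
def Qcomp (n k : ℕ) : AddSubgroup (Q n) :=
  AddSubgroup.map
    (((Ideal.Quotient.mk (J n)).comp (Ideal.Quotient.mk (Isq n))).toAddMonoidHom)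
    (homogeneousSubmodule (Fin (2 * n + 1)) ℤ k).toAddSubgroup

-- degree-0 homogeneous is constant
lemma eq_C_of_isHomogeneous_zero {σ : Type*} {p : MvPolynomial σ ℤ}
    (h : p.IsHomogeneous 0) : p = C (p.coeff 0) := by
  rw [← totalDegree_zero_iff_isHomogeneous, totalDegree_eq_zero_iff] at h
  classical
  ext m
  by_cases hm : m = 0
  · rw [hm, coeff_zero_C]
  · rw [coeff_C, if_neg (Ne.symm hm)]
    by_contra hc
    exact hm (Finsupp.ext fun x => h m (mem_support_iff.mpr hc) x)

def ev0 (n : ℕ) : Poly n →+* ℤ := (aeval fun _ => (0 : ℤ)).toRingHom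

lemma ev0_symEl (n k : ℕ) (hk : 1 ≤ k) : ev0 n (symEl n k) = 0 := by
  simp only [symEl, map_sum, map_prod]
  refine Finset.sum_eq_zero fun I hI => ?_
  obtain ⟨i, hi⟩ : I.Nonempty :=
    Finset.card_pos.mp (by rw [(Finset.mem_powersetCard.mp hI).2]; exact hk)
  exact Finset.prod_eq_zero hi (by simp [ev0])

def φS (n : ℕ) : S n →+* ℤ :=
  Ideal.Quotient.lift (Isq n) (ev0 n) (fun a ha => by
    revert a ha
    refine fun a ha => ?_
    have : Isq n ≤ RingHom.ker (ev0 n) := by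
      rw [Isq, Ideal.span_le]
      rintro _ ⟨i, rfl⟩
      simp [RingHom.mem_ker, ev0]
    exact this ha)

def φ (n : ℕ) : Q n →+* ℤ :=
  Ideal.Quotient.lift (J n) (φS n) (fun a ha => by
    have hle : J n ≤ RingHom.ker (φS n) := by
      rw [J, Ideal.span_le]
      rintro _ ⟨k, hk1, _, rfl⟩
      simp [RingHom.mem_ker, φS, Ideal.Quotient.lift_mk, ev0_symEl n k hk1]
      exact ev0_symEl n k hk1
    exact hle ha)

/-- Any S-module automorphism of Q preserving each graded
component is +identity or −identity. -/
theorem stmt11 (n : ℕ) (e : Q n ≃ₗ[S n] Q n)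
    (he : ∀ k : ℕ, ∀ x ∈ Qcomp n k, e x ∈ Qcomp n k) :
    (∀ x : Q n, e x = x) ∨ (∀ x : Q n, e x = -x) := by
  classical
  set π : Poly n →+* Q n :=
    ((Ideal.Quotient.mk (J n)).comp (Ideal.Quotient.mk (Isq n))) with hπ
  have h1 : (1 : Q n) ∈ Qcomp n 0 := ⟨1, isHomogeneous_one _ _, map_one π⟩
  obtain ⟨p, hp, hpe⟩ := he 0 1 h1
  simp only [RingHom.toAddMonoidHom_eq_coe, AddMonoidHom.coe_coe] at hpe
  have hpC : p = C (p.coeff 0) := eq_C_of_isHomogeneous_zero hp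
  set m : ℤ := p.coeff 0 with hm
  have he1 : e 1 = (m : Q n) := by
    rw [← hpe, hpC]
    have : (C m : Poly n) = (m : Poly n) := by
      simpa using map_intCast (C : ℤ →+* Poly n) m
    rw [this, map_intCast]
  have hsmul : ∀ (s t : S n), s • (Ideal.Quotient.mk (J n) t)
      = Ideal.Quotient.mk (J n) (s * t) := fun s t => rfl
  have key : ∀ x : Q n, e x = (m : Q n) * x := by
    intro x
    obtain ⟨s, rfl⟩ := Ideal.Quotient.mk_surjective (I := J n) x
    have h1' : Ideal.Quotient.mk (J n) s = s • (1 : Q n) := by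
      rw [← map_one (Ideal.Quotient.mk (J n)), hsmul, mul_one]
    rw [h1', map_smul, he1]
    have hc : (m : Q n) = Ideal.Quotient.mk (J n) (m : S n) := rfl
    rw [hc, hsmul, mul_comm s, map_mul, ← hc, ← h1']
  -- surjectivity gives m * (something) = 1 in ℤ
  obtain ⟨y, hy⟩ := e.surjective 1
  have : (m : Q n) * y = 1 := by rw [← key, hy]
  have hunit : m * φ n y = 1 := by
    have := congrArg (φ n) this
    rw [map_mul, map_one] at this
    have h2 : φ n (m : Q n) = m := map_intCast (φ n) m
    calc m * φ n y = φ n (m : Q n) * φ n y := by rw [h2]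
      _ = 1 := this
  have : m = 1 ∨ m = -1 := Int.isUnit_iff.mp (IsUnit.of_mul_eq_one _ hunit)
  rcases this with h | h
  · left; intro x; rw [key, h]; ring
  · right; intro x; rw [key, h]; ring

end

end Stmt11
end
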